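/- arXiv:1904.11004 — 5 statements merged into one kernel-verified Lean document; each statement's English description precedes it below -/
import Mathlib

section
/- Let 1 ≤ n ≤ d be integers, μ a Radon measure on ℝ^d, and B a ball intersecting supp μ. Then β_{μ,2}(B) ≤ α_{μ,2}(B). -/
open MeasureTheory Metric Set

noncomputable section

abbrev Euc (d : ℕ) : Type := EuclideanSpace ℝ (Fin d)

/-- An affine `n`-plane: a nonempty affine subspace whose direction has dimension `n`. -/
def IsAffinePlane {d : ℕ} (n : ℕ) (L : AffineSubspace ℝ (Euc d)) : Prop :=
  (L : Set (Euc d)).Nonempty ∧ Module.finrank ℝ L.direction = n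

/-- The support of a measure. -/
def measureSupport {d : ℕ} (μ : Measure (Euc d)) : Set (Euc d) :=
  { x | ∀ r > 0, 0 < μ (ball x r) }

/-- The quantity inside the infimum defining `β_{μ,p}(x,r)`, for a given plane `L`. -/
noncomputable def betaVal {d : ℕ} (p : ℝ) (μ : Measure (Euc d)) (x : Euc d) (r : ℝ)
    (L : AffineSubspace ℝ (Euc d)) : ℝ :=
  ((μ (ball x (3 * r))).toReal⁻¹ *
    ∫ y in ball x r, (Metric.infDist y (L : Set (Euc d)) / r) ^ p ∂μ) ^ (1 / p)

/-- The coefficient `β_{μ,p}(x,r)`: the infimum is over affine `n`-planes meeting `B(x,r)`. -/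
noncomputable def betaCoef {d : ℕ} (n : ℕ) (p : ℝ) (μ : Measure (Euc d)) (x : Euc d)
    (r : ℝ) : ℝ :=
  sInf { b | ∃ L : AffineSubspace ℝ (Euc d), IsAffinePlane n L ∧
    ((L : Set (Euc d)) ∩ ball x r).Nonempty ∧ b = betaVal p μ x r L }

/-- `Lip₁(B)`: 1-Lipschitz functions supported inside `B`. -/
def Lip1 {d : ℕ} (B : Set (Euc d)) : Set (Euc d → ℝ) :=
  { φ | LipschitzWith 1 φ ∧ tsupport φ ⊆ B }

/-- `F_B(μ,ν) = sup { |∫φ dμ − ∫φ dν| : φ ∈ Lip₁(B) }`. -/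
noncomputable def Fdist {d : ℕ} (B : Set (Euc d)) (μ ν : Measure (Euc d)) : ℝ :=
  sSup { t | ∃ φ ∈ Lip1 B, t = |(∫ x, φ x ∂μ) - ∫ x, φ x ∂ν| }

/-- The flat measure `c · H^n|_L`. -/
noncomputable def flatMeasure {d : ℕ} (n : ℕ) (c : ℝ) (L : AffineSubspace ℝ (Euc d)) :
    Measure (Euc d) :=
  ENNReal.ofReal c • (μH[(n : ℝ)]).restrict (L : Set (Euc d))

/-- The quantity inside the infimum defining `α_μ(x,r)`, for a given `c ≥ 0` and plane `L`. -/
noncomputable def alphaVal {d : ℕ} (n : ℕ) (μ : Measure (Euc d)) (x : Euc d) (r : ℝ)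
    (c : ℝ) (L : AffineSubspace ℝ (Euc d)) : ℝ :=
  Fdist (ball x r) μ (flatMeasure n c L) / (r * (μ (ball x (3 * r))).toReal)

/-- The coefficient `α_μ(x,r)`. -/
noncomputable def alphaCoef {d : ℕ} (n : ℕ) (μ : Measure (Euc d)) (x : Euc d) (r : ℝ) : ℝ :=
  sInf { a | ∃ c : ℝ, 0 ≤ c ∧ ∃ L : AffineSubspace ℝ (Euc d), IsAffinePlane n L ∧
    a = alphaVal n μ x r c L }

/-- The Wasserstein distance `W_p(σ,ν)`: infimum of `(∫ |x−y|^p dπ)^{1/p}` over all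
transport plans `π` with marginals `σ` and `ν`. -/
noncomputable def Wasserstein {d : ℕ} (p : ℝ) (σ ν : Measure (Euc d)) : ℝ :=
  sInf { w | ∃ π : Measure (Euc d × Euc d),
    π.map Prod.fst = σ ∧ π.map Prod.snd = ν ∧
    w = (∫ z, dist z.1 z.2 ^ p ∂π) ^ (1 / p) }

/-- The properties of the fixed radial bump function `φ` used in the definition of
`α_{μ,p}`. -/
def IsBumpFn {d : ℕ} (φ : Euc d → ℝ) : Prop :=
  (∃ g : ℝ → ℝ, ∀ x, φ x = g ‖x‖) ∧
  (∃ K : NNReal, LipschitzWith K φ) ∧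
  (∀ x, φ x ∈ Icc (0 : ℝ) 1) ∧
  (∀ x ∈ ball (0 : Euc d) 2, φ x = 1) ∧
  Function.support φ ⊆ ball (0 : Euc d) 3 ∧
  ∃ c > (0 : ℝ), ∀ x ∈ ball (0 : Euc d) 3,
    c⁻¹ * Metric.infDist x (sphere (0 : Euc d) 3) ^ 2 ≤ φ x ∧
    φ x ≤ c * Metric.infDist x (sphere (0 : Euc d) 3) ^ 2 ∧
    ‖fderiv ℝ φ x‖ ≤ c * Metric.infDist x (sphere (0 : Euc d) 3)

/-- `φ_B(y) = φ((y − x)/r)` for `B = B(x,r)`. -/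
noncomputable def phiB {d : ℕ} (φ : Euc d → ℝ) (x : Euc d) (r : ℝ) (y : Euc d) : ℝ :=
  φ (r⁻¹ • (y - x))

/-- The quantity inside the infimum defining `α_{μ,p}(x,r)`, for a given plane `L`:
`(1/(r μ(3B)^{1/p})) W_p(φ_B μ, a_{B,L} φ_B H^n|_L)`. -/
noncomputable def alphaPVal {d : ℕ} (n : ℕ) (p : ℝ) (φ : Euc d → ℝ) (μ : Measure (Euc d))
    (x : Euc d) (r : ℝ) (L : AffineSubspace ℝ (Euc d)) : ℝ :=
  (r * (μ (ball x (3 * r))).toReal ^ (1 / p))⁻¹ *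
    Wasserstein p
      (μ.withDensity fun y => ENNReal.ofReal (phiB φ x r y))
      (((μH[(n : ℝ)]).restrict (L : Set (Euc d))).withDensity fun y =>
        ENNReal.ofReal
          (((∫ z, phiB φ x r z ∂μ) /
              ∫ z, phiB φ x r z ∂((μH[(n : ℝ)]).restrict (L : Set (Euc d)))) *
            phiB φ x r y))

/-- The coefficient `α_{μ,p}(x,r)`: infimum over affine `n`-planes meeting `B(x,r)`. -/
noncomputable def alphaP {d : ℕ} (n : ℕ) (p : ℝ) (φ : Euc d → ℝ) (μ : Measure (Euc d))
    (x : Euc d) (r : ℝ) : ℝ :=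
  sInf { a | ∃ L : AffineSubspace ℝ (Euc d), IsAffinePlane n L ∧
    ((L : Set (Euc d)) ∩ ball x r).Nonempty ∧ a = alphaPVal n p φ μ x r L }

open scoped NNReal ENNReal


lemma eucHaus_ball_pos_lt_top (n : ℕ) (z : EuclideanSpace ℝ (Fin n)) {ρ : ℝ} (hρ : 0 < ρ) :
    0 < μH[(n:ℝ)] (ball z ρ) ∧ μH[(n:ℝ)] (ball z ρ) < ⊤ := by
  set f : EuclideanSpace ℝ (Fin n) → (Fin n → ℝ) := ⇑(WithLp.equiv 2 (Fin n → ℝ)) with hf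
  have hL : LipschitzWith 1 f := PiLp.lipschitzWith_ofLp 2 (fun _ : Fin n => ℝ)
  set K : ℝ≥0 := (Fintype.card (Fin n) : ℝ≥0) ^ ((1:ℝ≥0∞)/2).toReal with hK
  have hA : AntilipschitzWith K f := PiLp.antilipschitzWith_ofLp 2 (fun _ : Fin n => ℝ)
  have hvol : (μH[(n:ℝ)] : Measure (Fin n → ℝ)) = volume := by
    have := MeasureTheory.hausdorffMeasure_pi_real (ι := Fin n)
    simpa using this
  have hn0 : (0:ℝ) ≤ (n:ℝ) := Nat.cast_nonneg n
  set Kc : ℝ := max (K:ℝ) 1 with hKc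
  have hKc1 : (1:ℝ) ≤ Kc := le_max_right _ _
  have hKc0 : (0:ℝ) < Kc := lt_of_lt_of_le one_pos hKc1
  constructor
  · -- lower bound
    have hsub : ball (f z) (ρ / Kc) ⊆ f '' ball z ρ := by
      intro w hw
      refine ⟨(WithLp.equiv 2 (Fin n → ℝ)).symm w, ?_, by simp [hf]⟩
      have h1 : dist ((WithLp.equiv 2 (Fin n → ℝ)).symm w) z ≤ (K:ℝ) * dist w (f z) := by
        have := hA.le_mul_dist ((WithLp.equiv 2 (Fin n → ℝ)).symm w) z
        simpa [hf] using this
      have h2 : dist w (f z) < ρ / Kc := mem_ball.1 hw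
      have : (K:ℝ) * dist w (f z) ≤ Kc * dist w (f z) :=
        mul_le_mul_of_nonneg_right (le_max_left _ _) dist_nonneg
      have h3 : Kc * dist w (f z) < Kc * (ρ / Kc) := by
        exact mul_lt_mul_of_pos_left h2 hKc0
      rw [mul_div_cancel₀ _ (ne_of_gt hKc0)] at h3
      exact mem_ball.2 (lt_of_le_of_lt (h1.trans this) h3)
    have h4 : μH[(n:ℝ)] (f '' ball z ρ) ≤ 1 ^ (n:ℝ) * μH[(n:ℝ)] (ball z ρ) :=
      hL.hausdorffMeasure_image_le hn0 _
    have h5 : (0:ℝ≥0∞) < μH[(n:ℝ)] (ball (f z) (ρ / Kc)) := by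
      rw [hvol]
      exact measure_ball_pos _ _ (div_pos hρ hKc0)
    calc (0:ℝ≥0∞) < μH[(n:ℝ)] (ball (f z) (ρ / Kc)) := h5
      _ ≤ μH[(n:ℝ)] (f '' ball z ρ) := measure_mono hsub
      _ ≤ 1 ^ (n:ℝ) * μH[(n:ℝ)] (ball z ρ) := h4
      _ = μH[(n:ℝ)] (ball z ρ) := by simp
  · -- upper bound
    have h6 : μH[(n:ℝ)] (ball z ρ) ≤ (K:ℝ≥0∞) ^ (n:ℝ) * μH[(n:ℝ)] (f '' ball z ρ) :=
      hA.le_hausdorffMeasure_image hn0 _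
    have hsub2 : f '' ball z ρ ⊆ ball (f z) ρ := by
      intro w ⟨v, hv, hvw⟩
      subst hvw
      have := hL.dist_le_mul v z
      simp only [NNReal.coe_one, one_mul] at this
      exact mem_ball.2 (lt_of_le_of_lt this (mem_ball.1 hv))
    have h7 : μH[(n:ℝ)] (f '' ball z ρ) ≤ μH[(n:ℝ)] (ball (f z) ρ) := measure_mono hsub2
    have h8 : μH[(n:ℝ)] (ball (f z) ρ) < ⊤ := by
      rw [hvol]; exact measure_ball_lt_top
    calc μH[(n:ℝ)] (ball z ρ) ≤ (K:ℝ≥0∞) ^ (n:ℝ) * μH[(n:ℝ)] (ball (f z) ρ) :=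
          h6.trans (by gcongr)
      _ < ⊤ := ENNReal.mul_lt_top (by
          apply ENNReal.rpow_lt_top_of_nonneg hn0
          exact ENNReal.coe_ne_top) h8


lemma exists_isometry_onto_plane {d n : ℕ} {L : AffineSubspace ℝ (Euc d)}
    (hL : Module.finrank ℝ L.direction = n) {q : Euc d} (hq : q ∈ L) :
    ∃ f : EuclideanSpace ℝ (Fin n) → Euc d, Isometry f ∧ range f = (L : Set (Euc d)) ∧ f 0 = q := by
  let b : OrthonormalBasis (Fin n) ℝ L.direction :=
    (stdOrthonormalBasis ℝ L.direction).reindex (finCongr hL)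
  let e : EuclideanSpace ℝ (Fin n) ≃ₗᵢ[ℝ] L.direction := b.repr.symm
  refine ⟨fun v => q + (e v : Euc d), ?_, ?_, by simp⟩
  · apply Isometry.of_dist_eq
    intro u v
    have : dist (q + (e u : Euc d)) (q + (e v : Euc d)) = ‖(e u : Euc d) - (e v : Euc d)‖ := by
      rw [dist_eq_norm, add_sub_add_left_eq_sub]
    rw [this, ← Submodule.coe_sub, Submodule.norm_coe, ← dist_eq_norm, e.dist_map]
  · ext y
    constructor
    · rintro ⟨v, rfl⟩
      have hv : ((e v : L.direction) : Euc d) ∈ L.direction := (e v).2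
      have := AffineSubspace.vadd_mem_of_mem_direction hv hq
      simpa [vadd_eq_add, add_comm] using this
    · intro hy
      have hmem : y - q ∈ L.direction := AffineSubspace.vsub_mem_direction hy hq
      refine ⟨e.symm ⟨y - q, hmem⟩, ?_⟩
      simp [e.apply_symm_apply]

lemma plane_ball_pos {d n : ℕ} {L : AffineSubspace ℝ (Euc d)}
    (hL : Module.finrank ℝ L.direction = n) {q : Euc d} (hq : q ∈ L) {ρ : ℝ} (hρ : 0 < ρ) :
    0 < μH[(n:ℝ)] ((L : Set (Euc d)) ∩ ball q ρ) := by
  obtain ⟨f, hf, hrange, hf0⟩ := exists_isometry_onto_plane hL hq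
  have hn0 : (0:ℝ) ≤ (n:ℝ) := Nat.cast_nonneg n
  have himg : (L : Set (Euc d)) ∩ ball q ρ = f '' (f ⁻¹' ball q ρ) := by
    rw [image_preimage_eq_inter_range, hrange, inter_comm]
  rw [himg, hf.hausdorffMeasure_image (Or.inl hn0)]
  have hsub : ball (0 : EuclideanSpace ℝ (Fin n)) ρ ⊆ f ⁻¹' ball q ρ := by
    intro v hv
    have : dist (f v) q = dist v 0 := by rw [← hf0, hf.dist_eq]
    exact mem_preimage.2 (mem_ball.2 (by rw [this]; exact mem_ball.1 hv))
  exact lt_of_lt_of_le (eucHaus_ball_pos_lt_top n 0 hρ).1 (measure_mono hsub)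

lemma plane_ball_lt_top {d n : ℕ} {L : AffineSubspace ℝ (Euc d)}
    (hL : Module.finrank ℝ L.direction = n) {q : Euc d} (hq : q ∈ L) (z : Euc d) {R : ℝ}
    (hR : 0 < R) : μH[(n:ℝ)] ((L : Set (Euc d)) ∩ ball z R) < ⊤ := by
  obtain ⟨f, hf, hrange, hf0⟩ := exists_isometry_onto_plane hL hq
  have hn0 : (0:ℝ) ≤ (n:ℝ) := Nat.cast_nonneg n
  have himg : (L : Set (Euc d)) ∩ ball z R = f '' (f ⁻¹' ball z R) := by
    rw [image_preimage_eq_inter_range, hrange, inter_comm]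
  rw [himg, hf.hausdorffMeasure_image (Or.inl hn0)]
  have hsub : f ⁻¹' ball z R ⊆ ball (0 : EuclideanSpace ℝ (Fin n)) (R + dist z q) := by
    intro v hv
    have h1 : dist (f v) z < R := mem_ball.1 (mem_preimage.1 hv)
    have h2 : dist v 0 = dist (f v) q := by rw [← hf0, hf.dist_eq]
    have h3 : dist (f v) q ≤ dist (f v) z + dist z q := dist_triangle _ _ _
    exact mem_ball.2 (by rw [h2]; linarith)
  have hR2 : (0:ℝ) < R + dist z q := by have := dist_nonneg (x := z) (y := q); linarith
  exact lt_of_le_of_lt (measure_mono hsub) (eucHaus_ball_pos_lt_top n 0 hR2).2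


section Helpers
variable {d : ℕ} {φ : Euc d → ℝ} {x : Euc d} {r : ℝ}

lemma phiB_mem_Icc (hφ : IsBumpFn φ) (y : Euc d) : phiB φ x r y ∈ Icc (0:ℝ) 1 :=
  hφ.2.2.1 _

lemma phiB_eq_one (hφ : IsBumpFn φ) (hr : 0 < r) {y : Euc d} (hy : y ∈ ball x (2*r)) :
    phiB φ x r y = 1 := by
  apply hφ.2.2.2.1
  rw [mem_ball, dist_zero_right, norm_smul, norm_inv, Real.norm_eq_abs, abs_of_pos hr]
  rw [mem_ball, dist_eq_norm] at hy
  rw [← dist_eq_norm] at hy ⊢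
  calc r⁻¹ * dist y x < r⁻¹ * (2*r) := by
        exact mul_lt_mul_of_pos_left hy (inv_pos.2 hr)
    _ = 2 := by field_simp


lemma phiB_eq_zero (hφ : IsBumpFn φ) (hr : 0 < r) {y : Euc d} (hy : y ∉ ball x (3*r)) :
    phiB φ x r y = 0 := by
  by_contra h
  have hmem : r⁻¹ • (y - x) ∈ Function.support φ := h
  have := hφ.2.2.2.2.1 hmem
  rw [mem_ball, dist_zero_right, norm_smul, norm_inv, Real.norm_eq_abs, abs_of_pos hr] at this
  apply hy
  rw [mem_ball, dist_eq_norm]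
  have h3 : r⁻¹ * ‖y - x‖ < 3 := this
  calc ‖y - x‖ = r * (r⁻¹ * ‖y - x‖) := by field_simp
    _ < r * 3 := mul_lt_mul_of_pos_left h3 hr
    _ = 3 * r := by ring

lemma phiB_continuous (hφ : IsBumpFn φ) : Continuous (phiB φ x r) := by
  obtain ⟨K, hK⟩ := hφ.2.1
  exact hK.continuous.comp (by fun_prop)

end Helpers


section Key
variable {d n : ℕ}

lemma key (φ : Euc d → ℝ) (hφ : IsBumpFn φ) (μ : Measure (Euc d))
    [IsLocallyFiniteMeasure μ] (x : Euc d) {r : ℝ} (hr : 0 < r)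
    (L : AffineSubspace ℝ (Euc d)) (hL : IsAffinePlane n L)
    (hLB : ((L : Set (Euc d)) ∩ ball x r).Nonempty) :
    betaVal 2 μ x r L ≤ alphaPVal n 2 φ μ x r L := by
  obtain ⟨hLne, hLdim⟩ := hL
  obtain ⟨q, hqL, hqB⟩ := hLB
  have hLclosed : IsClosed (L : Set (Euc d)) := AffineSubspace.closed_of_finiteDimensional L
  have hLmeas : MeasurableSet (L : Set (Euc d)) := hLclosed.measurableSet
  have hpow2 : ∀ a : ℝ, a ^ (2:ℝ) = a ^ 2 := fun a => by
    rw [show (2:ℝ) = ((2:ℕ):ℝ) by norm_num, Real.rpow_natCast]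
  rw [betaVal, alphaPVal, Wasserstein]
  simp only [hpow2]
  set H : Measure (Euc d) := μH[(n:ℝ)] with hH
  set HL : Measure (Euc d) := H.restrict (L : Set (Euc d)) with hHL
  set σ : Measure (Euc d) := μ.withDensity fun y => ENNReal.ofReal (phiB φ x r y) with hσ
  set Iμ : ℝ := ∫ z, phiB φ x r z ∂μ with hIμ
  set IH : ℝ := ∫ z, phiB φ x r z ∂HL with hIH2
  set c : ℝ := Iμ / IH with hc
  set ν : Measure (Euc d) :=
    HL.withDensity fun y => ENNReal.ofReal (c * phiB φ x r y) with hν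
  set T : ℝ := (μ (ball x (3*r))).toReal with hT
  set J : ℝ := ∫ y in ball x r, (infDist y (L : Set (Euc d)) / r) ^ 2 ∂μ with hJ
  -- basic phiB facts
  have hφc : Continuous (phiB φ x r) := phiB_continuous hφ
  have hφ0 : ∀ y, 0 ≤ phiB φ x r y := fun y => (phiB_mem_Icc hφ y).1
  have hφ1 : ∀ y, phiB φ x r y ≤ 1 := fun y => (phiB_mem_Icc hφ y).2
  have hmeasφ : Measurable fun y => ENNReal.ofReal (phiB φ x r y) :=
    (ENNReal.measurable_ofReal.comp hφc.measurable)
  -- σ univ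
  have hQ : σ univ = ∫⁻ y, ENNReal.ofReal (phiB φ x r y) ∂μ := by
    rw [hσ, withDensity_apply _ MeasurableSet.univ, setLIntegral_univ]
  have hQle : σ univ ≤ μ (ball x (3*r)) := by
    rw [hQ]
    calc ∫⁻ y, ENNReal.ofReal (phiB φ x r y) ∂μ
        ≤ ∫⁻ y, (ball x (3*r)).indicator 1 y ∂μ := by
          apply lintegral_mono
          intro y
          by_cases hy : y ∈ ball x (3*r)
          · simp [hy, ENNReal.ofReal_le_one.2 (hφ1 y)]
          · simp [hy, phiB_eq_zero hφ hr hy]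
      _ = μ (ball x (3*r)) := lintegral_indicator_one measurableSet_ball
  have hball_fin : μ (ball x (3*r)) < ⊤ := measure_ball_lt_top
  have hQtop : σ univ < ⊤ := lt_of_le_of_lt hQle hball_fin
  -- P facts
  set P : ℝ≥0∞ := ∫⁻ y, ENNReal.ofReal (phiB φ x r y) ∂HL with hP
  have hPle : P ≤ H ((L : Set (Euc d)) ∩ ball x (3*r)) := by
    rw [hP]
    calc ∫⁻ y, ENNReal.ofReal (phiB φ x r y) ∂HL
        ≤ ∫⁻ y, (ball x (3*r)).indicator 1 y ∂HL := by
          apply lintegral_mono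
          intro y
          by_cases hy : y ∈ ball x (3*r)
          · simp [hy, ENNReal.ofReal_le_one.2 (hφ1 y)]
          · simp [hy, phiB_eq_zero hφ hr hy]
      _ = HL (ball x (3*r)) := lintegral_indicator_one measurableSet_ball
      _ = H ((L : Set (Euc d)) ∩ ball x (3*r)) := by
          rw [hHL, Measure.restrict_apply measurableSet_ball, inter_comm]
  have hPtop : P < ⊤ :=
    lt_of_le_of_lt hPle (plane_ball_lt_top hLdim hqL x (by linarith))
  have hPpos : 0 < P := by
    have hρ : 0 < r - dist q x := by
      rw [mem_ball] at hqB; linarith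
    have hsub : (L : Set (Euc d)) ∩ ball q (r - dist q x) ⊆
        (L : Set (Euc d)) ∩ ball x (2*r) := by
      apply inter_subset_inter_right
      intro y hy
      rw [mem_ball] at hy ⊢
      calc dist y x ≤ dist y q + dist q x := dist_triangle _ _ _
        _ < 2*r := by linarith
    calc (0:ℝ≥0∞) < H ((L : Set (Euc d)) ∩ ball q (r - dist q x)) :=
          plane_ball_pos hLdim hqL hρ
      _ ≤ H ((L : Set (Euc d)) ∩ ball x (2*r)) := measure_mono hsub
      _ = HL (ball x (2*r)) := by
          rw [hHL, Measure.restrict_apply measurableSet_ball, inter_comm]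
      _ ≤ P := by
          rw [hP]
          calc HL (ball x (2*r)) = ∫⁻ y, (ball x (2*r)).indicator 1 y ∂HL :=
              (lintegral_indicator_one measurableSet_ball).symm
            _ ≤ ∫⁻ y, ENNReal.ofReal (phiB φ x r y) ∂HL := by
              apply lintegral_mono
              intro y
              by_cases hy : y ∈ ball x (2*r)
              · simp [hy, phiB_eq_one hφ hr hy]
              · simp [hy]
  -- Bochner/lintegral identifications
  have hIHP : IH = P.toReal := by
    rw [hIH2, hP]
    exact integral_eq_lintegral_of_nonneg_ae (Filter.Eventually.of_forall hφ0)
      hφc.aestronglyMeasurable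
  have hIμQ : Iμ = (σ univ).toReal := by
    rw [hIμ, hQ]
    exact integral_eq_lintegral_of_nonneg_ae (Filter.Eventually.of_forall hφ0)
      hφc.aestronglyMeasurable
  have hIHpos : 0 < IH := by
    rw [hIHP]; exact ENNReal.toReal_pos (ne_of_gt hPpos) (ne_of_lt hPtop)
  have hIμ0 : 0 ≤ Iμ := by
    rw [hIμ]; exact integral_nonneg hφ0
  have hc0 : 0 ≤ c := div_nonneg hIμ0 (le_of_lt hIHpos)
  -- mass equality
  have hν_univ : ν univ = σ univ := by
    rw [hν, withDensity_apply _ MeasurableSet.univ, setLIntegral_univ]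
    have hh : ∀ y, ENNReal.ofReal (c * phiB φ x r y)
        = ENNReal.ofReal c * ENNReal.ofReal (phiB φ x r y) := fun y =>
      ENNReal.ofReal_mul hc0
    simp only [hh]
    rw [lintegral_const_mul' _ _ ENNReal.ofReal_ne_top, ← hP]
    have hPIH : P = ENNReal.ofReal IH := by
      rw [hIHP, ENNReal.ofReal_toReal (ne_of_lt hPtop)]
    rw [hPIH, ← ENNReal.ofReal_mul hc0, hc, div_mul_cancel₀ _ (ne_of_gt hIHpos)]
    rw [hIμQ, ENNReal.ofReal_toReal (ne_of_lt hQtop)]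
  -- nonemptiness of the transport-plan set
  have hWne : {w | ∃ π : Measure (Euc d × Euc d),
      π.map Prod.fst = σ ∧ π.map Prod.snd = ν ∧
      w = (∫ z, dist z.1 z.2 ^ 2 ∂π) ^ (1/(2:ℝ))}.Nonempty := by
    by_cases hm : σ univ = 0
    · refine ⟨_, ⟨0, ?_, ?_, rfl⟩⟩
      · rw [Measure.map_zero]; exact (Measure.measure_univ_eq_zero.mp hm).symm
      · rw [Measure.map_zero]; exact (Measure.measure_univ_eq_zero.mp (hν_univ.trans hm)).symm
    · haveI : IsFiniteMeasure σ := ⟨hQtop⟩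
      haveI : IsFiniteMeasure ν := ⟨by rw [hν_univ]; exact hQtop⟩
      refine ⟨_, ⟨(σ univ)⁻¹ • (σ.prod ν), ?_, ?_, rfl⟩⟩
      · rw [Measure.map_smul, Measure.map_fst_prod, hν_univ, smul_smul,
          ENNReal.inv_mul_cancel hm (ne_of_lt hQtop), one_smul]
      · rw [Measure.map_smul, Measure.map_snd_prod, smul_smul,
          ENNReal.inv_mul_cancel hm (ne_of_lt hQtop), one_smul]
  -- nonnegativity of plan values
  have hW0 : ∀ w ∈ {w | ∃ π : Measure (Euc d × Euc d),
      π.map Prod.fst = σ ∧ π.map Prod.snd = ν ∧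
      w = (∫ z, dist z.1 z.2 ^ 2 ∂π) ^ (1/(2:ℝ))}, 0 ≤ w := by
    rintro w ⟨π, -, -, rfl⟩
    exact Real.rpow_nonneg (integral_nonneg fun z => sq_nonneg _) _
  by_cases hT0 : T = 0
  · rw [hT0]
    rw [inv_zero, zero_mul, Real.zero_rpow (by norm_num : (1:ℝ)/2 ≠ 0)]
    exact mul_nonneg (inv_nonneg.2 (mul_nonneg hr.le le_rfl)) (Real.sInf_nonneg hW0)
  · have hTnn : (0:ℝ) ≤ T := ENNReal.toReal_nonneg
    have hTpos : 0 < T := hTnn.lt_of_ne (Ne.symm hT0)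
    have hrT : 0 < r * T ^ ((1:ℝ)/2) := mul_pos hr (Real.rpow_pos_of_pos hTpos _)
    have hrr : ((r⁻¹^2 : ℝ)) ^ ((1:ℝ)/2) = r⁻¹ := by
      rw [← Real.rpow_natCast (r⁻¹) 2, ← Real.rpow_mul (inv_nonneg.2 hr.le),
        show ((2:ℕ):ℝ) * ((1:ℝ)/2) = 1 by norm_num, Real.rpow_one]
    have hkey : ∀ w ∈ {w | ∃ π : Measure (Euc d × Euc d),
        π.map Prod.fst = σ ∧ π.map Prod.snd = ν ∧
        w = (∫ z, dist z.1 z.2 ^ 2 ∂π) ^ (1/(2:ℝ))},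
        (T⁻¹ * J) ^ ((1:ℝ)/2) * (r * T ^ ((1:ℝ)/2)) ≤ w := by
      rintro w ⟨π, hfst, hsnd, rfl⟩
      have haeL : ∀ᵐ z ∂π, z.2 ∈ (L : Set (Euc d)) := by
        rw [Filter.eventually_iff, mem_ae_iff]
        have hset : {z : Euc d × Euc d | z.2 ∈ (L : Set (Euc d))}ᶜ
            = Prod.snd ⁻¹' ((L : Set (Euc d))ᶜ) := rfl
        rw [hset, ← Measure.map_apply measurable_snd hLmeas.compl, hsnd, hν,
          withDensity_apply _ hLmeas.compl, hHL,
          Measure.restrict_restrict hLmeas.compl, compl_inter_self,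
          Measure.restrict_empty, lintegral_zero_measure]
      have hae1 : ∀ᵐ z ∂π, z.1 ∈ ball x (3*r) := by
        rw [Filter.eventually_iff, mem_ae_iff]
        have hset : {z : Euc d × Euc d | z.1 ∈ ball x (3*r)}ᶜ
            = Prod.fst ⁻¹' ((ball x (3*r))ᶜ) := rfl
        rw [hset, ← Measure.map_apply measurable_fst measurableSet_ball.compl, hfst, hσ,
          withDensity_apply _ measurableSet_ball.compl]
        have hz : (fun y => ENNReal.ofReal (phiB φ x r y)) =ᵐ[μ.restrict (ball x (3*r))ᶜ] 0 := by
          refine (ae_restrict_iff' measurableSet_ball.compl).2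
            (Filter.Eventually.of_forall fun y hy => ?_)
          simp [phiB_eq_zero hφ hr (by simpa using hy)]
        rw [lintegral_congr_ae hz]; simp
      have hae2 : ∀ᵐ z ∂π, z.2 ∈ ball x (3*r) := by
        rw [Filter.eventually_iff, mem_ae_iff]
        have hset : {z : Euc d × Euc d | z.2 ∈ ball x (3*r)}ᶜ
            = Prod.snd ⁻¹' ((ball x (3*r))ᶜ) := rfl
        rw [hset, ← Measure.map_apply measurable_snd measurableSet_ball.compl, hsnd, hν,
          withDensity_apply _ measurableSet_ball.compl]
        have hz : (fun y => ENNReal.ofReal (c * phiB φ x r y))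
            =ᵐ[HL.restrict (ball x (3*r))ᶜ] 0 := by
          refine (ae_restrict_iff' measurableSet_ball.compl).2
            (Filter.Eventually.of_forall fun y hy => ?_)
          simp [phiB_eq_zero hφ hr (by simpa using hy)]
        rw [lintegral_congr_ae hz]; simp
      have hπuniv : π univ = σ univ := by
        rw [← hfst, Measure.map_apply measurable_fst MeasurableSet.univ, preimage_univ]
      have hπfin : π univ < ⊤ := by rw [hπuniv]; exact hQtop
      set D : ℝ≥0∞ := ∫⁻ z, ENNReal.ofReal (dist z.1 z.2 ^ 2) ∂π with hD
      have hDb : ∀ᵐ z ∂π, ENNReal.ofReal (dist z.1 z.2 ^2) ≤ ENNReal.ofReal ((6*r)^2) := by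
        filter_upwards [hae1, hae2] with z hz1 hz2
        apply ENNReal.ofReal_le_ofReal
        have h1 : dist z.1 x < 3*r := mem_ball.1 hz1
        have h2 : dist x z.2 < 3*r := by rw [dist_comm]; exact mem_ball.1 hz2
        have h3 : dist z.1 z.2 ≤ dist z.1 x + dist x z.2 := dist_triangle _ _ _
        nlinarith [dist_nonneg (x := z.1) (y := z.2)]
      have hDfin : D < ⊤ := by
        calc D ≤ ∫⁻ _, ENNReal.ofReal ((6*r)^2) ∂π := lintegral_mono_ae hDb
          _ = ENNReal.ofReal ((6*r)^2) * π univ := lintegral_const _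
          _ < ⊤ := ENNReal.mul_lt_top ENNReal.ofReal_lt_top hπfin
      have hfmeas : Measurable fun y =>
          ENNReal.ofReal ((infDist y (L : Set (Euc d)) / r)^2) :=
        ENNReal.measurable_ofReal.comp
          (((continuous_infDist_pt _).div_const r).pow 2).measurable
      have hres : σ.restrict (ball x r) = μ.restrict (ball x r) := by
        rw [hσ, restrict_withDensity measurableSet_ball]
        have h1 : (fun y => ENNReal.ofReal (phiB φ x r y)) =ᵐ[μ.restrict (ball x r)] 1 := by
          refine (ae_restrict_iff' measurableSet_ball).2
            (Filter.Eventually.of_forall fun y hy => ?_)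
          have : y ∈ ball x (2*r) := ball_subset_ball (by linarith) hy
          simp [phiB_eq_one hφ hr this]
        rw [withDensity_congr_ae h1, withDensity_one]
      set A : ℝ≥0∞ :=
        ∫⁻ y in ball x r, ENNReal.ofReal ((infDist y (L : Set (Euc d)) / r)^2) ∂μ with hA
      have hchain : A ≤ ENNReal.ofReal (r⁻¹^2) * D := by
        calc A = ∫⁻ y in ball x r,
              ENNReal.ofReal ((infDist y (L : Set (Euc d)) / r)^2) ∂σ := by
              rw [hA, hres]
          _ ≤ ∫⁻ y, ENNReal.ofReal ((infDist y (L : Set (Euc d)) / r)^2) ∂σ :=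
              setLIntegral_le_lintegral _ _
          _ = ∫⁻ z : Euc d × Euc d,
              ENNReal.ofReal ((infDist z.1 (L : Set (Euc d)) / r)^2) ∂π := by
              rw [← hfst, lintegral_map hfmeas measurable_fst]
          _ ≤ ∫⁻ z : Euc d × Euc d, ENNReal.ofReal ((dist z.1 z.2 / r)^2) ∂π := by
              apply lintegral_mono_ae
              filter_upwards [haeL] with z hz
              apply ENNReal.ofReal_le_ofReal
              have h1 : infDist z.1 (L : Set (Euc d)) ≤ dist z.1 z.2 :=
                infDist_le_dist_of_mem hz
              have h0 : (0:ℝ) ≤ infDist z.1 (L : Set (Euc d)) / r :=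
                div_nonneg infDist_nonneg hr.le
              exact pow_le_pow_left₀ h0 (by gcongr) 2
          _ = ENNReal.ofReal (r⁻¹^2) * D := by
              have hptw : ∀ a : ℝ, ENNReal.ofReal ((a / r)^2)
                  = ENNReal.ofReal (r⁻¹^2) * ENNReal.ofReal (a^2) := fun a => by
                rw [← ENNReal.ofReal_mul (sq_nonneg _)]
                congr 1; ring
              simp only [hptw]
              rw [lintegral_const_mul' _ _ ENNReal.ofReal_ne_top, hD]
      have hcont2 : Continuous fun z : Euc d × Euc d => dist z.1 z.2 ^ 2 :=
        continuous_dist.pow 2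
      have hwD : ∫ z : Euc d × Euc d, dist z.1 z.2 ^ 2 ∂π = D.toReal := by
        rw [hD]
        exact integral_eq_lintegral_of_nonneg_ae
          (Filter.Eventually.of_forall fun z => sq_nonneg _) hcont2.aestronglyMeasurable
      have hJA : J = A.toReal := by
        rw [hJ, hA]
        exact integral_eq_lintegral_of_nonneg_ae
          (Filter.Eventually.of_forall fun y => sq_nonneg _)
          (((continuous_infDist_pt _).div_const r).pow 2).aestronglyMeasurable
      have hDt0 : (0:ℝ) ≤ D.toReal := ENNReal.toReal_nonneg
      have hJle : J ≤ r⁻¹^2 * D.toReal := by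
        rw [hJA]
        calc A.toReal ≤ (ENNReal.ofReal (r⁻¹^2) * D).toReal :=
              ENNReal.toReal_mono
                (ne_of_lt (ENNReal.mul_lt_top ENNReal.ofReal_lt_top hDfin)) hchain
          _ = r⁻¹^2 * D.toReal := by
              rw [ENNReal.toReal_mul, ENNReal.toReal_ofReal (sq_nonneg _)]
      have hJ0 : (0:ℝ) ≤ J := by
        rw [hJ]; exact integral_nonneg fun y => sq_nonneg _
      rw [hwD]
      have hstep : (T⁻¹ * J) ^ ((1:ℝ)/2) ≤ (T⁻¹ * (r⁻¹^2 * D.toReal)) ^ ((1:ℝ)/2) :=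
        Real.rpow_le_rpow (mul_nonneg (inv_nonneg.2 hTnn) hJ0)
          (mul_le_mul_of_nonneg_left hJle (inv_nonneg.2 hTnn)) (by norm_num)
      have heq : (T⁻¹ * (r⁻¹^2 * D.toReal)) ^ ((1:ℝ)/2)
          = (T ^ ((1:ℝ)/2))⁻¹ * (r⁻¹ * D.toReal ^ ((1:ℝ)/2)) := by
        rw [Real.mul_rpow (inv_nonneg.2 hTnn) (mul_nonneg (sq_nonneg _) hDt0),
          Real.mul_rpow (sq_nonneg _) hDt0, Real.inv_rpow hTnn, hrr]
      have hT12 : T ^ ((1:ℝ)/2) ≠ 0 := ne_of_gt (Real.rpow_pos_of_pos hTpos _)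
      calc (T⁻¹ * J) ^ ((1:ℝ)/2) * (r * T ^ ((1:ℝ)/2))
          ≤ (T ^ ((1:ℝ)/2))⁻¹ * (r⁻¹ * D.toReal ^ ((1:ℝ)/2)) * (r * T ^ ((1:ℝ)/2)) :=
            mul_le_mul_of_nonneg_right (hstep.trans (le_of_eq heq)) hrT.le
        _ = D.toReal ^ ((1:ℝ)/2) := by
            field_simp
    have hsInf := le_csInf hWne hkey
    have hfin : (T⁻¹ * J) ^ ((1:ℝ)/2)
        = ((T⁻¹ * J) ^ ((1:ℝ)/2) * (r * T ^ ((1:ℝ)/2))) * (r * T ^ ((1:ℝ)/2))⁻¹ := by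
      field_simp
    rw [hfin]
    exact le_trans (mul_le_mul_of_nonneg_right hsInf (inv_nonneg.2 hrT.le))
      (le_of_eq (mul_comm _ _))

end Key


theorem statement4' (n d : ℕ) (hn : 1 ≤ n) (hnd : n ≤ d)
    (φ : Euc d → ℝ) (hφ : IsBumpFn φ)
    (μ : Measure (Euc d)) [IsLocallyFiniteMeasure μ]
    (x : Euc d) (r : ℝ) (hr : 0 < r)
    (hB : (ball x r ∩ measureSupport μ).Nonempty) :
    betaCoef n 2 μ x r ≤ alphaP n 2 φ μ x r := by
  classical
  -- construct an affine n-plane through x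
  have hplane : ∃ L0 : AffineSubspace ℝ (Euc d), IsAffinePlane n L0 ∧ x ∈ L0 := by
    set b := (EuclideanSpace.basisFun (Fin d) ℝ).toBasis with hb
    set v : Fin n → Euc d := fun i => b (Fin.castLE hnd i) with hv
    have hli : LinearIndependent ℝ v :=
      b.linearIndependent.comp _ (Fin.castLE_injective hnd)
    set W := Submodule.span ℝ (Set.range v) with hW
    have hWrank : Module.finrank ℝ W = n := by
      rw [hW, finrank_span_eq_card hli, Fintype.card_fin]
    refine ⟨AffineSubspace.mk' x W, ⟨⟨x, AffineSubspace.self_mem_mk' x W⟩, ?_⟩,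
      AffineSubspace.self_mem_mk' x W⟩
    rw [AffineSubspace.direction_mk']
    exact hWrank
  obtain ⟨L0, hL0, hxL0⟩ := hplane
  rw [betaCoef, alphaP]
  apply le_csInf
  · exact ⟨alphaPVal n 2 φ μ x r L0, L0, hL0, ⟨x, hxL0, mem_ball_self hr⟩, rfl⟩
  · rintro a ⟨L, hL, hmeet, rfl⟩
    refine le_trans (csInf_le ?_ ?_) (key φ hφ μ x hr L hL hmeet)
    · refine ⟨0, ?_⟩
      rintro b ⟨L', hL', hmeet', rfl⟩
      rw [betaVal]
      exact Real.rpow_nonneg (mul_nonneg (inv_nonneg.2 ENNReal.toReal_nonneg)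
        (integral_nonneg fun y =>
          Real.rpow_nonneg (div_nonneg infDist_nonneg hr.le) _)) _
    · exact ⟨L, hL, hmeet, rfl⟩

/-- For a Radon measure `μ` and a ball `B` intersecting `supp μ`,
`β_{μ,2}(B) ≤ α_{μ,2}(B)`. -/
theorem statement4 (n d : ℕ) (hn : 1 ≤ n) (hnd : n ≤ d)
    (φ : Euc d → ℝ) (hφ : IsBumpFn φ)
    (μ : Measure (Euc d)) [IsLocallyFiniteMeasure μ]
    (x : Euc d) (r : ℝ) (hr : 0 < r)
    (hB : (ball x r ∩ measureSupport μ).Nonempty) :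
    betaCoef n 2 μ x r ≤ alphaP n 2 φ μ x r :=
  statement4' n d hn hnd φ hφ μ x r hr hB

end
end

section
/- Let 1 ≤ n ≤ d be integers and C₀ ≥ 1. Let μ be a Radon measure on ℝ^d and B a ball with μ(3B) > 0 and μ(6B) ≤ C₀ μ(3B). Then β_{μ,1}(B) ≤ β_{μ,2}(B), and there exists a constant C depending only on n, d and C₀ such that β_{μ,1}(B) ≤ C α_μ(2B). -/
open MeasureTheory Metric Set

noncomputable section

/-- `μ` is `n`-rectifiable: `μ ≪ H^n` and `μ`-a.a. of the space is covered by countably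
many Lipschitz images of `ℝ^n`. -/
def IsNRectifiable {d : ℕ} (n : ℕ) (μ : Measure (Euc d)) : Prop :=
  μ ≪ μH[(n : ℝ)] ∧
  ∃ f : ℕ → Euc n → Euc d,
    (∀ i, ∃ K : NNReal, LipschitzWith K (f i)) ∧
    μ (Set.univ \ ⋃ i, Set.range (f i)) = 0

open ENNReal
 /-- There is an affine `n`-plane through any given point. -/
lemma exists_plane {n d : ℕ} (hnd : n ≤ d) (z : Euc d) :
    ∃ L : AffineSubspace ℝ (Euc d), IsAffinePlane n L ∧ z ∈ L := by
  classical
  set b := EuclideanSpace.basisFun (Fin d) ℝ with hb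
  set f : Fin n → Euc d := fun i => b (Fin.castLE hnd i) with hf
  have hli : LinearIndependent ℝ f := by
    exact b.toBasis.linearIndependent.comp _ (Fin.castLE_injective hnd)
  set V : Submodule ℝ (Euc d) := Submodule.span ℝ (Set.range f) with hV
  have hrank : Module.finrank ℝ V = n := by
    rw [hV, finrank_span_eq_card hli, Fintype.card_fin]
  refine ⟨AffineSubspace.mk' z V, ⟨⟨z, AffineSubspace.self_mem_mk' z V⟩, ?_⟩,
    AffineSubspace.self_mem_mk' z V⟩
  rw [AffineSubspace.direction_mk']
  exact hrank

/-- Hausdorff measure of a bounded set in `Euc m` with exponent `m` is finite. -/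
lemma hausdorff_bounded_lt_top (m : ℕ) {s : Set (Euc m)} (hs : Bornology.IsBounded s) :
    μH[(m : ℝ)] s < ⊤ := by
  classical
  set e : Euc m ≃L[ℝ] (Fin m → ℝ) :=
    (PiLp.continuousLinearEquiv 2 ℝ (fun _ : Fin m => ℝ)) with he
  have hse : s ⊆ e.symm '' (e '' s) := by
    intro y hy; exact ⟨e y, mem_image_of_mem _ hy, e.symm_apply_apply y⟩
  have hlip : LipschitzWith ‖(e.symm : (Fin m → ℝ) →L[ℝ] Euc m)‖₊
      (e.symm : (Fin m → ℝ) →L[ℝ] Euc m) :=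
    (e.symm : (Fin m → ℝ) →L[ℝ] Euc m).lipschitz
  have h1 : μH[(m : ℝ)] (e.symm '' (e '' s)) ≤
      ((‖(e.symm : (Fin m → ℝ) →L[ℝ] Euc m)‖₊ : ℝ≥0∞)) ^ (m : ℝ) * μH[(m : ℝ)] (e '' s) := by
    simpa using hlip.hausdorffMeasure_image_le (by positivity : (0:ℝ) ≤ (m:ℝ)) (e '' s)
  have hbd : Bornology.IsBounded (e '' s) :=
    (LipschitzWith.isBounded_image (e : Euc m →L[ℝ] (Fin m → ℝ)).lipschitz hs)
  have hpi : μH[(m : ℝ)] (e '' s) < ⊤ := by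
    have hvol : (μH[(m : ℝ)] : Measure (Fin m → ℝ)) = volume := by
      simpa using (MeasureTheory.hausdorffMeasure_pi_real (ι := Fin m))
    rw [hvol]
    obtain ⟨R, hR⟩ := hbd.subset_closedBall 0
    exact lt_of_le_of_lt (measure_mono hR) (measure_closedBall_lt_top)
  calc μH[(m : ℝ)] s ≤ _ := measure_mono hse
    _ ≤ _ := h1
    _ < ⊤ := ENNReal.mul_lt_top
        (ENNReal.rpow_lt_top_of_nonneg (by positivity) ENNReal.coe_ne_top) hpi

/-- The Hausdorff measure of an affine `n`-plane intersected with a bounded set is finite. -/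
lemma plane_hausdorff_lt_top {n d : ℕ} {L : AffineSubspace ℝ (Euc d)}
    (hL : IsAffinePlane n L) {s : Set (Euc d)} (hs : Bornology.IsBounded s) :
    μH[(n : ℝ)] ((L : Set (Euc d)) ∩ s) < ⊤ := by
  classical
  obtain ⟨p₀, hp₀⟩ := hL.1
  set V := L.direction with hV
  set m := Module.finrank ℝ V with hm
  have hmn : m = n := hL.2
  set e : EuclideanSpace ℝ (Fin m) ≃ₗᵢ[ℝ] V := (stdOrthonormalBasis ℝ V).repr.symm with he
  set F : EuclideanSpace ℝ (Fin m) → Euc d := fun v => p₀ + (e v : Euc d) with hF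
  have hiso : Isometry F := by
    apply Isometry.of_dist_eq
    intro a b
    have : dist (F a) (F b) = dist ((e a : Euc d)) ((e b : Euc d)) := by
      simp [hF, dist_add_left]
    rw [this, ← Subtype.dist_eq, e.dist_map]
  obtain ⟨R, hR⟩ : ∃ R, s ⊆ closedBall p₀ R := by
    obtain ⟨R, hR⟩ := hs.subset_closedBall p₀
    exact ⟨R, hR⟩
  have hsub : (L : Set (Euc d)) ∩ s ⊆ F '' (closedBall 0 R) := by
    rintro y ⟨hyL, hys⟩
    have hu : y - p₀ ∈ V := by
      simpa using AffineSubspace.vsub_mem_direction hyL hp₀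
    refine ⟨e.symm ⟨y - p₀, hu⟩, ?_, ?_⟩
    · rw [mem_closedBall]
      have h1 : dist (e.symm ⟨y - p₀, hu⟩) 0 = ‖e.symm ⟨y - p₀, hu⟩‖ := by
        simp
      rw [h1, e.symm.norm_map]
      have : ‖(⟨y - p₀, hu⟩ : V)‖ = dist y p₀ := by
        simp [dist_eq_norm]
      rw [this]
      exact (mem_closedBall.mp (hR hys))
    · simp [hF]
  calc μH[(n : ℝ)] ((L : Set (Euc d)) ∩ s) ≤ μH[(n : ℝ)] (F '' (closedBall 0 R)) :=
        measure_mono hsub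
    _ = μH[(n : ℝ)] (closedBall (0 : EuclideanSpace ℝ (Fin m)) R) :=
        hiso.hausdorffMeasure_image (Or.inl (by positivity)) _
    _ < ⊤ := by
        rw [← hmn]
        exact hausdorff_bounded_lt_top m isBounded_closedBall
/-- Any function in `Lip1 (ball x R)` is bounded by `2R` (when `0 < d`). -/
lemma lip1_bound {d : ℕ} (hd : 0 < d) {x : Euc d} {R : ℝ} (hR : 0 ≤ R) {φ : Euc d → ℝ}
    (hφ : φ ∈ Lip1 (ball x R)) (y : Euc d) : |φ y| ≤ 2 * R := by
  obtain ⟨hlip, hsupp⟩ := hφ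
  by_cases hy : y ∈ tsupport φ
  · have hyball : y ∈ ball x R := hsupp hy
    have hRpos : 0 < R := by
      by_contra h
      push_neg at h
      rw [ball_eq_empty.mpr h] at hyball
      exact hyball
    set v : Euc d := (2 * R) • EuclideanSpace.single (⟨0, hd⟩ : Fin d) (1 : ℝ) with hv
    have hvnorm : ‖v‖ = 2 * R := by
      rw [hv, norm_smul]
      have h1 : ‖EuclideanSpace.single (⟨0, hd⟩ : Fin d) (1 : ℝ)‖ = 1 := by simp
      rw [h1, mul_one, Real.norm_eq_abs, abs_of_nonneg (by linarith)]
    have hw : y + v ∉ ball x R := by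
      rw [mem_ball]
      push_neg
      have h1 : dist (y + v) y = ‖v‖ := by simp [dist_eq_norm]
      have h2 : dist (y + v) y ≤ dist (y + v) x + dist x y := dist_triangle _ _ _
      have h3 : dist x y < R := by rw [dist_comm]; exact mem_ball.mp hyball
      rw [h1, hvnorm] at h2
      linarith
    have hφw : φ (y + v) = 0 :=
      image_eq_zero_of_notMem_tsupport (fun h => hw (hsupp h))
    have : |φ y - φ (y + v)| ≤ dist y (y + v) := by
      simpa [Real.dist_eq] using hlip.dist_le_mul y (y + v)
    rw [hφw, sub_zero] at this
    have : |φ y| ≤ ‖v‖ := by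
      simpa [dist_eq_norm] using this
    rw [hvnorm] at this; exact this
  · rw [image_eq_zero_of_notMem_tsupport hy]
    simp
    linarith

lemma abs_integral_le {d : ℕ} (hd : 0 < d) (ρ : Measure (Euc d)) {x : Euc d} {R : ℝ}
    (hR : 0 ≤ R) (hρ : ρ (ball x R) ≠ ⊤) {φ : Euc d → ℝ} (hφ : φ ∈ Lip1 (ball x R)) :
    |∫ y, φ y ∂ρ| ≤ 2 * R * (ρ (ball x R)).toReal := by
  have hb := lip1_bound hd hR hφ
  have hRnn : 0 ≤ 2 * R := le_trans (abs_nonneg _) (hb x)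
  have h1 : |∫ y, φ y ∂ρ| ≤ (∫⁻ y, ENNReal.ofReal |φ y| ∂ρ).toReal := by
    simpa [Real.norm_eq_abs] using norm_integral_le_lintegral_norm (μ := ρ) φ
  have h2 : ∫⁻ y, ENNReal.ofReal |φ y| ∂ρ ≤ ENNReal.ofReal (2 * R) * ρ (ball x R) := by
    have hmono : ∀ y, ENNReal.ofReal |φ y| ≤ (ball x R).indicator (fun _ => ENNReal.ofReal (2 * R)) y := by
      intro y
      by_cases hy : y ∈ ball x R
      · rw [indicator_of_mem hy]
        exact ENNReal.ofReal_le_ofReal (hb y)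
      · rw [indicator_of_notMem hy]
        have : φ y = 0 := image_eq_zero_of_notMem_tsupport (fun h => hy (hφ.2 h))
        simp [this]
    calc ∫⁻ y, ENNReal.ofReal |φ y| ∂ρ
        ≤ ∫⁻ y, (ball x R).indicator (fun _ => ENNReal.ofReal (2 * R)) y ∂ρ :=
          lintegral_mono hmono
      _ = ENNReal.ofReal (2 * R) * ρ (ball x R) := by
          rw [lintegral_indicator measurableSet_ball]
          simp [mul_comm]
  calc |∫ y, φ y ∂ρ| ≤ (∫⁻ y, ENNReal.ofReal |φ y| ∂ρ).toReal := h1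
    _ ≤ (ENNReal.ofReal (2 * R) * ρ (ball x R)).toReal := by
        apply ENNReal.toReal_mono
        · exact ENNReal.mul_ne_top ENNReal.ofReal_ne_top hρ
        · exact h2
    _ = 2 * R * (ρ (ball x R)).toReal := by
        rw [ENNReal.toReal_mul, ENNReal.toReal_ofReal hRnn]

lemma fdist_bddAbove {d : ℕ} (hd : 0 < d) (μ ν : Measure (Euc d)) (x : Euc d) (R : ℝ)
    (hR : 0 ≤ R) (hμ : μ (ball x R) ≠ ⊤) (hν : ν (ball x R) ≠ ⊤) :
    BddAbove { t | ∃ φ ∈ Lip1 (ball x R), t = |(∫ y, φ y ∂μ) - ∫ y, φ y ∂ν| } := by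
  refine ⟨2 * R * (μ (ball x R)).toReal + 2 * R * (ν (ball x R)).toReal, ?_⟩
  rintro t ⟨φ, hφ, rfl⟩
  calc |(∫ y, φ y ∂μ) - ∫ y, φ y ∂ν| ≤ |∫ y, φ y ∂μ| + |∫ y, φ y ∂ν| := abs_sub _ _
    _ ≤ _ := add_le_add (abs_integral_le hd μ hR hμ hφ) (abs_integral_le hd ν hR hν hφ)
lemma flat_ball_ne_top {n d : ℕ} {L : AffineSubspace ℝ (Euc d)} (hL : IsAffinePlane n L)
    (c : ℝ) (x : Euc d) (R : ℝ) : flatMeasure n c L (ball x R) ≠ ⊤ := by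
  rw [flatMeasure, Measure.smul_apply, Measure.restrict_apply measurableSet_ball,
    smul_eq_mul]
  have h1 : ball x R ∩ (L : Set (Euc d)) = (L : Set (Euc d)) ∩ ball x R := inter_comm _ _
  rw [h1]
  exact ENNReal.mul_ne_top ENNReal.ofReal_ne_top
    (plane_hausdorff_lt_top hL isBounded_ball).ne

/-- The key lower bound on `Fdist` in terms of the truncated distance to the plane. -/
lemma fdist_key {n d : ℕ} (hd : 0 < d) (μ : Measure (Euc d)) [IsLocallyFiniteMeasure μ]
    (x : Euc d) (r : ℝ) (hr : 0 < r) (c : ℝ) (L : AffineSubspace ℝ (Euc d))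
    (hL : IsAffinePlane n L) :
    ∫ y in ball x r, min (Metric.infDist y (L : Set (Euc d))) (r / 2) ∂μ
      ≤ Fdist (ball x (2 * r)) μ (flatMeasure n c L) := by
  classical
  set φ : Euc d → ℝ := fun y =>
    min (Metric.infDist y (L : Set (Euc d)))
      (Metric.infDist y ((closedBall x (3 / 2 * r))ᶜ)) with hφdef
  have hφ0 : ∀ y, 0 ≤ φ y := fun y =>
    le_min Metric.infDist_nonneg Metric.infDist_nonneg
  have hφlip : LipschitzWith 1 φ := by
    simpa using (Metric.lipschitz_infDist_pt (L : Set (Euc d))).min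
      (Metric.lipschitz_infDist_pt ((closedBall x (3 / 2 * r))ᶜ))
  have hφsupp0 : Function.support φ ⊆ closedBall x (3 / 2 * r) := by
    intro y hy
    by_contra hyc
    have : φ y = 0 := by
      have h0 : Metric.infDist y ((closedBall x (3 / 2 * r))ᶜ) = 0 :=
        Metric.infDist_zero_of_mem hyc
      rw [hφdef]
      simp only
      rw [h0]
      exact min_eq_right Metric.infDist_nonneg
    exact hy this
  have hφsupp : tsupport φ ⊆ ball x (2 * r) := by
    refine subset_trans (closure_minimal hφsupp0 Metric.isClosed_closedBall) ?_
    exact closedBall_subset_ball (by linarith)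
  have hφmem : φ ∈ Lip1 (ball x (2 * r)) := ⟨hφlip, hφsupp⟩
  have hcs : HasCompactSupport φ :=
    HasCompactSupport.intro (isCompact_closedBall x (3 / 2 * r))
      (fun y hy => by_contra fun h => hy (hφsupp0 (by simpa using h)))
  have hφcont : Continuous φ := hφlip.continuous
  have hφint : Integrable φ μ := hφcont.integrable_of_hasCompactSupport hcs
  -- integral against flat measure is zero
  have hLmeas : MeasurableSet (L : Set (Euc d)) :=
    (AffineSubspace.closed_of_finiteDimensional L).measurableSet
  have hν0 : ∫ y, φ y ∂(flatMeasure n c L) = 0 := by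
    rw [flatMeasure, integral_smul_measure]
    have h0 : ∫ y in (L : Set (Euc d)), φ y ∂(μH[(n : ℝ)]) = 0 := by
      rw [setIntegral_congr_fun hLmeas
        (fun y hy => show φ y = (fun _ => (0 : ℝ)) y by
          have h1 : Metric.infDist y (L : Set (Euc d)) = 0 :=
            Metric.infDist_zero_of_mem hy
          simp only [hφdef, h1]
          exact min_eq_left Metric.infDist_nonneg)]
      simp
    rw [h0]
    simp
  -- Fdist bound
  have hbdd := fdist_bddAbove hd μ (flatMeasure n c L) x (2 * r) (by linarith)
    (measure_ball_lt_top).ne (flat_ball_ne_top hL c x (2 * r))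
  have hFd : |(∫ y, φ y ∂μ) - ∫ y, φ y ∂(flatMeasure n c L)| ≤
      Fdist (ball x (2 * r)) μ (flatMeasure n c L) :=
    le_csSup hbdd ⟨φ, hφmem, rfl⟩
  rw [hν0, sub_zero] at hFd
  -- pointwise bound on the ball
  have hcompl_ne : ((closedBall x (3 / 2 * r))ᶜ : Set (Euc d)).Nonempty := by
    refine ⟨x + (2 * r) • EuclideanSpace.single (⟨0, hd⟩ : Fin d) (1 : ℝ), ?_⟩
    simp only [mem_compl_iff, mem_closedBall, not_le]
    have h1 : dist (x + (2 * r) • EuclideanSpace.single (⟨0, hd⟩ : Fin d) (1 : ℝ)) x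
        = 2 * r := by
      rw [dist_eq_norm]
      simp only [add_sub_cancel_left]
      rw [norm_smul]
      have h2 : ‖EuclideanSpace.single (⟨0, hd⟩ : Fin d) (1 : ℝ)‖ = 1 := by simp
      rw [h2, mul_one, Real.norm_eq_abs, abs_of_nonneg (by linarith)]
    rw [h1]; linarith
  have hpt : ∀ y ∈ ball x r,
      min (Metric.infDist y (L : Set (Euc d))) (r / 2) ≤ φ y := by
    intro y hy
    refine min_le_min le_rfl ?_
    by_contra hlt
    push_neg at hlt
    obtain ⟨w, hw, hdw⟩ := (Metric.infDist_lt_iff hcompl_ne).mp hlt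
    have h1 : 3 / 2 * r < dist w x := by
      simpa [mem_closedBall, not_le] using hw
    have h2 : dist y x < r := mem_ball.mp hy
    have h3 : dist w x ≤ dist w y + dist y x := dist_triangle _ _ _
    rw [dist_comm w y] at h3
    linarith
  -- integrability
  have hgint : IntegrableOn (fun y => min (Metric.infDist y (L : Set (Euc d))) (r / 2))
      (ball x r) μ := by
    have hgc : Continuous (fun y => min (Metric.infDist y (L : Set (Euc d))) (r / 2)) :=
      (Metric.continuous_infDist_pt _).min continuous_const
    exact (hgc.locallyIntegrable.integrableOn_isCompact
      (isCompact_closedBall x r)).mono_set ball_subset_closedBall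
  calc ∫ y in ball x r, min (Metric.infDist y (L : Set (Euc d))) (r / 2) ∂μ
      ≤ ∫ y in ball x r, φ y ∂μ :=
        setIntegral_mono_on hgint hφint.integrableOn measurableSet_ball hpt
    _ ≤ ∫ y, φ y ∂μ := setIntegral_le_integral hφint (ae_of_all _ hφ0)
    _ ≤ |∫ y, φ y ∂μ| := le_abs_self _
    _ ≤ _ := hFd
lemma betaVal_nonneg {d : ℕ} (p : ℝ) (μ : Measure (Euc d)) (x : Euc d) {r : ℝ} (hr : 0 ≤ r)
    (L : AffineSubspace ℝ (Euc d)) : 0 ≤ betaVal p μ x r L := by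
  apply Real.rpow_nonneg
  apply mul_nonneg (inv_nonneg.mpr ENNReal.toReal_nonneg)
  apply setIntegral_nonneg measurableSet_ball
  intro y _
  exact Real.rpow_nonneg (div_nonneg Metric.infDist_nonneg hr) p

lemma betaVal_one_le_two {d : ℕ} (μ : Measure (Euc d)) [IsLocallyFiniteMeasure μ]
    (x : Euc d) (r : ℝ) (hr : 0 < r) (hμ3 : 0 < μ (ball x (3 * r)))
    (L : AffineSubspace ℝ (Euc d)) (hmeet : ((L : Set (Euc d)) ∩ ball x r).Nonempty) :
    betaVal 1 μ x r L ≤ betaVal 2 μ x r L := by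
  classical
  set c3 : ℝ := (μ (ball x (3 * r))).toReal with hc3
  have hc3pos : 0 < c3 :=
    ENNReal.toReal_pos hμ3.ne' (measure_ball_lt_top).ne
  set f : Euc d → ℝ := fun y => Metric.infDist y (L : Set (Euc d)) / r with hfdef
  have hf0 : ∀ y, 0 ≤ f y := fun y =>
    div_nonneg Metric.infDist_nonneg hr.le
  obtain ⟨w, hwL, hwb⟩ := hmeet
  have hfb : ∀ y ∈ ball x r, f y ≤ 2 := by
    intro y hy
    have h1 : Metric.infDist y (L : Set (Euc d)) ≤ dist y w :=
      Metric.infDist_le_dist_of_mem hwL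
    have h2 : dist y w ≤ dist y x + dist x w := dist_triangle _ _ _
    have h3 : dist y x < r := mem_ball.mp hy
    have h4 : dist x w < r := by rw [dist_comm]; exact mem_ball.mp hwb
    rw [hfdef]
    rw [div_le_iff₀ hr]
    linarith
  set μ' : Measure (Euc d) := μ.restrict (ball x r) with hμ'
  haveI : IsFiniteMeasure μ' := by
    constructor
    rw [hμ', Measure.restrict_apply_univ]
    exact measure_ball_lt_top
  have hfae : ∀ᵐ y ∂μ', ‖f y‖ ≤ 2 := by
    rw [hμ', ae_restrict_iff' measurableSet_ball]
    exact ae_of_all _ fun y hy => by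
      rw [Real.norm_eq_abs, abs_of_nonneg (hf0 y)]; exact hfb y hy
  have hfmeas : AEStronglyMeasurable f μ' :=
    ((Metric.continuous_infDist_pt (L : Set (Euc d))).div_const r).aestronglyMeasurable
  have hfL2 : MemLp f (ENNReal.ofReal 2) μ' :=
    MemLp.of_bound (p := ENNReal.ofReal 2) (μ := μ') hfmeas 2 hfae
  have h1L2 : MemLp (fun _ : Euc d => (1 : ℝ)) (ENNReal.ofReal 2) μ' := memLp_const 1
  have hpq : Real.HolderConjugate 2 2 := Real.HolderConjugate.two_two
  have hholder := integral_mul_le_Lp_mul_Lq_of_nonneg (μ := μ') hpq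
    (ae_of_all _ hf0) (ae_of_all _ fun _ => zero_le_one) hfL2 h1L2
  simp only [mul_one] at hholder
  -- hholder : ∫ f ∂μ' ≤ (∫ f ^ (2:ℝ) ∂μ')^(1/2) * (∫ 1 ^ (2:ℝ) ∂μ')^(1/2)
  set A : ℝ := ∫ y, f y ∂μ' with hA
  set Q : ℝ := ∫ y, f y ^ (2 : ℝ) ∂μ' with hQ
  have hone : ∫ y, (1 : ℝ) ^ (2 : ℝ) ∂μ' = (μ (ball x r)).toReal := by
    simp [hμ', Real.one_rpow, Measure.real]
  rw [hone] at hholder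
  set m : ℝ := (μ (ball x r)).toReal with hm
  have hA0 : 0 ≤ A := integral_nonneg hf0
  have hQ0 : 0 ≤ Q := integral_nonneg fun y => Real.rpow_nonneg (hf0 y) 2
  have hm0 : 0 ≤ m := ENNReal.toReal_nonneg
  have hmc3 : m ≤ c3 := by
    apply ENNReal.toReal_mono (measure_ball_lt_top).ne
    exact measure_mono (ball_subset_ball (by linarith))
  have hrp : Q ^ ((1:ℝ)/2) = Real.sqrt Q := (Real.sqrt_eq_rpow Q).symm
  have hrm : m ^ ((1:ℝ)/2) = Real.sqrt m := (Real.sqrt_eq_rpow m).symm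
  rw [hrp, hrm] at hholder
  have hA2 : A ^ 2 ≤ Q * m := by
    have h1 : A ^ 2 ≤ (Real.sqrt Q * Real.sqrt m) ^ 2 := by
      apply pow_le_pow_left₀ hA0 hholder
    calc A ^ 2 ≤ (Real.sqrt Q * Real.sqrt m) ^ 2 := h1
      _ = Real.sqrt Q ^ 2 * Real.sqrt m ^ 2 := mul_pow _ _ _
      _ = Q * m := by rw [Real.sq_sqrt hQ0, Real.sq_sqrt hm0]
  -- now conclude
  have hgoal : c3⁻¹ * A ≤ Real.sqrt (c3⁻¹ * Q) := by
    rw [Real.le_sqrt (by positivity) (by positivity)]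
    have h2 : (c3⁻¹ * A) ^ 2 = c3⁻¹ ^ 2 * A ^ 2 := mul_pow _ _ _
    rw [h2]
    calc c3⁻¹ ^ 2 * A ^ 2 ≤ c3⁻¹ ^ 2 * (Q * m) := by
          apply mul_le_mul_of_nonneg_left hA2 (by positivity)
      _ ≤ c3⁻¹ ^ 2 * (Q * c3) := by
          apply mul_le_mul_of_nonneg_left (mul_le_mul_of_nonneg_left hmc3 hQ0) (by positivity)
      _ = c3⁻¹ * Q := by field_simp
  -- identify with betaVal
  have hbv1 : betaVal 1 μ x r L = c3⁻¹ * A := by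
    rw [betaVal, hA, hμ']
    simp [Real.rpow_one]
    rfl
  have hbv2 : betaVal 2 μ x r L = Real.sqrt (c3⁻¹ * Q) := by
    rw [betaVal, hQ, hμ', ← hc3]
    rw [Real.sqrt_eq_rpow]
  rw [hbv1, hbv2]
  exact hgoal
/-- Translating a plane to pass through `z` increases distances by at most `dist z w`. -/
lemma infDist_translate {d : ℕ} (L : AffineSubspace ℝ (Euc d))
    (hL : (L : Set (Euc d)).Nonempty) {z w : Euc d} (hw : w ∈ L) (y : Euc d) :
    Metric.infDist y ((AffineSubspace.mk' z L.direction : AffineSubspace ℝ (Euc d)) :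
        Set (Euc d))
      ≤ Metric.infDist y (L : Set (Euc d)) + dist z w := by
  obtain ⟨p, hp, hdp⟩ :=
    (AffineSubspace.closed_of_finiteDimensional L).exists_infDist_eq_dist hL y
  have hq : p + (z - w) ∈ AffineSubspace.mk' z L.direction := by
    rw [AffineSubspace.mem_mk']
    have h1 : (p + (z - w)) -ᵥ z = p - w := by
      simp [vsub_eq_sub]
      abel
    rw [h1]
    simpa [vsub_eq_sub] using AffineSubspace.vsub_mem_direction hp hw
  calc Metric.infDist y ((AffineSubspace.mk' z L.direction : AffineSubspace ℝ (Euc d)) :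
        Set (Euc d)) ≤ dist y (p + (z - w)) := Metric.infDist_le_dist_of_mem hq
    _ ≤ dist y p + dist p (p + (z - w)) := dist_triangle _ _ _
    _ = Metric.infDist y (L : Set (Euc d)) + dist z w := by
        rw [← hdp]
        congr 1
        rw [dist_eq_norm, dist_eq_norm]
        simp
        rw [← norm_neg]
        congr 1
        abel

/-- Markov-type selection of a point where `g` is small. -/
lemma exists_small {d : ℕ} (μ : Measure (Euc d)) {s : Set (Euc d)} (hs : MeasurableSet s)
    {g : Euc d → ℝ} (hg : ∀ y, 0 ≤ g y) (hgint : IntegrableOn g s μ)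
    (hμs : 0 < μ s) (hμst : μ s ≠ ⊤) :
    ∃ z ∈ s, g z ≤ 2 * (∫ y in s, g y ∂μ) / (μ s).toReal := by
  classical
  by_contra hcon
  push_neg at hcon
  set I := ∫ y in s, g y ∂μ with hI
  have hms : 0 < (μ s).toReal := ENNReal.toReal_pos hμs.ne' hμst
  have hI0 : 0 ≤ I := setIntegral_nonneg hs fun y _ => hg y
  have h2 : 2 * I / (μ s).toReal * (μ s).toReal ≤ I := by
    have hconst : IntegrableOn (fun _ : Euc d => 2 * I / (μ s).toReal) s μ := by
      exact integrableOn_const hμst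
    have hmono := setIntegral_mono_on hconst hgint hs fun y hy => (hcon y hy).le
    rw [setIntegral_const] at hmono
    simpa [smul_eq_mul, mul_comm, Measure.real] using hmono
  rw [div_mul_cancel₀ _ hms.ne'] at h2
  have hIzero : I = 0 := le_antisymm (by linarith) hI0
  have haez : g =ᵐ[μ.restrict s] 0 := by
    rw [← setIntegral_eq_zero_iff_of_nonneg_ae (ae_of_all _ fun y => hg y) hgint]
    exact hIzero
  have hae : ∀ᵐ y ∂μ, y ∈ s → g y = 0 := by
    rw [Filter.EventuallyEq] at haez
    exact (ae_restrict_iff' hs).mp haez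
  rw [ae_iff] at hae
  have hsub : s ⊆ {y | ¬(y ∈ s → g y = 0)} := by
    intro y hy hcon2
    have h3 := hcon y hy
    rw [hIzero] at h3
    simp at h3
    have := hcon2 hy
    linarith
  exact absurd (le_trans (measure_mono hsub) (le_of_eq hae)) (not_le.mpr hμs)

/-- If `μ(3B) > 0` and `μ(6B) ≤ C₀ μ(3B)`, then `β_{μ,1}(B) ≤ β_{μ,2}(B)`
and `β_{μ,1}(B) ≤ C α_μ(2B)` for some `C = C(n,d,C₀)`. -/
theorem statement6 (n d : ℕ) (hn : 1 ≤ n) (hnd : n ≤ d) (C₀ : ℝ) (hC₀ : 1 ≤ C₀) :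
    ∃ C > (0 : ℝ), ∀ (μ : Measure (Euc d)), IsLocallyFiniteMeasure μ →
      ∀ (x : Euc d) (r : ℝ), 0 < r →
        0 < μ (ball x (3 * r)) →
        μ (ball x (6 * r)) ≤ ENNReal.ofReal C₀ * μ (ball x (3 * r)) →
        betaCoef n 1 μ x r ≤ betaCoef n 2 μ x r ∧
        betaCoef n 1 μ x r ≤ C * alphaCoef n μ x (2 * r) := by
  refine ⟨12 * C₀, by linarith, ?_⟩
  intro μ hloc x r hr hμ3 hdb
  haveI := hloc
  have hd : 0 < d := lt_of_lt_of_le hn hnd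
  set c3 : ℝ := (μ (ball x (3 * r))).toReal with hc3def
  have hc3pos : 0 < c3 := ENNReal.toReal_pos hμ3.ne' measure_ball_lt_top.ne
  obtain ⟨L₀, hL₀plane, hL₀mem⟩ := exists_plane hnd x
  have hL₀meet : ((L₀ : Set (Euc d)) ∩ ball x r).Nonempty :=
    ⟨x, hL₀mem, mem_ball_self hr⟩
  have hbdd1 : BddBelow { b | ∃ L : AffineSubspace ℝ (Euc d), IsAffinePlane n L ∧
      ((L : Set (Euc d)) ∩ ball x r).Nonempty ∧ b = betaVal 1 μ x r L } := by
    refine ⟨0, ?_⟩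
    rintro b ⟨L, -, -, rfl⟩
    exact betaVal_nonneg 1 μ x hr.le L
  constructor
  · -- β₁ ≤ β₂
    refine le_csInf ⟨betaVal 2 μ x r L₀, L₀, hL₀plane, hL₀meet, rfl⟩ ?_
    rintro b ⟨L, hLp, hLm, rfl⟩
    exact le_trans (csInf_le hbdd1 ⟨L, hLp, hLm, rfl⟩)
      (betaVal_one_le_two μ x r hr hμ3 L hLm)
  · -- β₁ ≤ 12C₀ α(2B)
    have hCpos : (0 : ℝ) < 12 * C₀ := by linarith
    have hkey : ∀ c : ℝ, 0 ≤ c → ∀ L : AffineSubspace ℝ (Euc d), IsAffinePlane n L →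
        betaCoef n 1 μ x r ≤ 12 * C₀ * alphaVal n μ x (2 * r) c L := by
      intro c hc L hLp
      set F : ℝ := Fdist (ball x (2 * r)) μ (flatMeasure n c L) with hFdef
      set g : Euc d → ℝ := fun y => min (Metric.infDist y (L : Set (Euc d))) (r / 2)
        with hgdef
      have hg0 : ∀ y, 0 ≤ g y := fun y => le_min Metric.infDist_nonneg (by linarith)
      have hgint : IntegrableOn g (ball x r) μ := by
        have hgc : Continuous g :=
          (Metric.continuous_infDist_pt _).min continuous_const
        exact (hgc.locallyIntegrable.integrableOn_isCompact
          (isCompact_closedBall x r)).mono_set ball_subset_closedBall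
      set I : ℝ := ∫ y in ball x r, g y ∂μ with hIdef
      have hI0 : 0 ≤ I := setIntegral_nonneg measurableSet_ball fun y _ => hg0 y
      have hIF : I ≤ F := fdist_key hd μ x r hr c L hLp
      have hF0 : 0 ≤ F := le_trans hI0 hIF
      set c6 : ℝ := (μ (ball x (6 * r))).toReal with hc6def
      have hμ6pos : 0 < μ (ball x (6 * r)) :=
        lt_of_lt_of_le hμ3 (measure_mono (ball_subset_ball (by linarith)))
      have hc6pos : 0 < c6 := ENNReal.toReal_pos hμ6pos.ne' measure_ball_lt_top.ne
      have hc6le : c6 ≤ C₀ * c3 := by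
        have h1 := ENNReal.toReal_mono
          (ENNReal.mul_ne_top ENNReal.ofReal_ne_top measure_ball_lt_top.ne) hdb
        rwa [ENNReal.toReal_mul, ENNReal.toReal_ofReal (by linarith)] at h1
      have halpha : alphaVal n μ x (2 * r) c L = F / (2 * r * c6) := by
        rw [alphaVal, show (3 : ℝ) * (2 * r) = 6 * r by ring]
      rw [halpha]
      suffices hsuf : betaCoef n 1 μ x r ≤ 6 * F / (r * c3) by
        refine le_trans hsuf ?_
        rw [mul_div_assoc' (12 * C₀) F (2 * r * c6),
          div_le_div_iff₀ (by positivity) (by positivity)]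
        have h2 : (0:ℝ) ≤ 12 * F * r := by positivity
        nlinarith [mul_le_mul_of_nonneg_left hc6le h2]
      set mB : ℝ := (μ (ball x r)).toReal with hmBdef
      have hmB0 : 0 ≤ mB := ENNReal.toReal_nonneg
      rcases le_or_gt (mB * (r / 4)) I with hcase | hcase
      · -- big mass case: use the plane through x
        have hle : betaCoef n 1 μ x r ≤ betaVal 1 μ x r L₀ :=
          csInf_le hbdd1 ⟨L₀, hL₀plane, hL₀meet, rfl⟩
        have hbv1 : betaVal 1 μ x r L₀ =
            c3⁻¹ * ∫ y in ball x r, Metric.infDist y (L₀ : Set (Euc d)) / r ∂μ := by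
          rw [betaVal]
          simp [Real.rpow_one]
          exact Or.inl rfl
        have hintbound : ∫ y in ball x r, Metric.infDist y (L₀ : Set (Euc d)) / r ∂μ
            ≤ mB := by
          have hint1 : IntegrableOn (fun y => Metric.infDist y (L₀ : Set (Euc d)) / r)
              (ball x r) μ := by
            have hgc : Continuous fun y => Metric.infDist y (L₀ : Set (Euc d)) / r :=
              (Metric.continuous_infDist_pt _).div_const r
            exact (hgc.locallyIntegrable.integrableOn_isCompact
              (isCompact_closedBall x r)).mono_set ball_subset_closedBall
          have hptb : ∀ y ∈ ball x r,
              Metric.infDist y (L₀ : Set (Euc d)) / r ≤ (1 : ℝ) := by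
            intro y hy
            have h3 : Metric.infDist y (L₀ : Set (Euc d)) ≤ dist y x :=
              Metric.infDist_le_dist_of_mem hL₀mem
            have h4 : dist y x < r := mem_ball.mp hy
            rw [div_le_one hr]
            linarith
          have h2 := setIntegral_mono_on hint1
            (integrableOn_const measure_ball_lt_top.ne)
            measurableSet_ball hptb
          rw [setIntegral_const, smul_eq_mul, mul_one] at h2
          exact h2
        have h5 : ∫ y in ball x r, Metric.infDist y (L₀ : Set (Euc d)) / r ∂μ
            ≤ 6 * F / r := by
          refine le_trans hintbound ?_
          rw [le_div_iff₀ hr]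
          nlinarith
        calc betaCoef n 1 μ x r ≤ betaVal 1 μ x r L₀ := hle
          _ = c3⁻¹ * ∫ y in ball x r, Metric.infDist y (L₀ : Set (Euc d)) / r ∂μ := hbv1
          _ ≤ c3⁻¹ * (6 * F / r) := mul_le_mul_of_nonneg_left h5 (by positivity)
          _ = 6 * F / (r * c3) := by
              rw [mul_comm, ← div_eq_mul_inv, div_div]
      · -- translate-the-plane case
        have hmBpos : 0 < mB := by
          rcases le_or_gt mB 0 with h | h
          · exfalso
            have hz : mB = 0 := le_antisymm h hmB0
            rw [hz, zero_mul] at hcase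
            linarith
          · exact h
        have hμBpos : 0 < μ (ball x r) := (ENNReal.toReal_pos_iff.mp hmBpos).1
        obtain ⟨z, hz, hgz⟩ := exists_small μ measurableSet_ball hg0 hgint hμBpos
          measure_ball_lt_top.ne
        rw [← hIdef, ← hmBdef] at hgz
        have htlt : 2 * I / mB < r / 2 := by
          rw [div_lt_iff₀ hmBpos]
          nlinarith
        have htz : Metric.infDist z (L : Set (Euc d)) ≤ 2 * I / mB := by
          by_contra hcon
          push_neg at hcon
          exact absurd hgz (not_le.mpr (lt_min hcon htlt))
        obtain ⟨w, hwL, hwd⟩ :=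
          (AffineSubspace.closed_of_finiteDimensional L).exists_infDist_eq_dist hLp.1 z
        have ht' : dist z w ≤ 2 * I / mB := hwd ▸ htz
        have ht'0 : (0:ℝ) ≤ dist z w := dist_nonneg
        set L' : AffineSubspace ℝ (Euc d) := AffineSubspace.mk' z L.direction with hL'def
        have hzL' : z ∈ L' := AffineSubspace.self_mem_mk' z L.direction
        have hL'p : IsAffinePlane n L' := ⟨⟨z, hzL'⟩, by
          rw [hL'def, AffineSubspace.direction_mk']; exact hLp.2⟩
        have hL'meet : ((L' : Set (Euc d)) ∩ ball x r).Nonempty := ⟨z, hzL', hz⟩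
        have hpt : ∀ y ∈ ball x r,
            Metric.infDist y (L' : Set (Euc d)) ≤ 4 * g y + dist z w := by
          intro y hy
          have h1 : Metric.infDist y (L' : Set (Euc d)) ≤
              Metric.infDist y (L : Set (Euc d)) + dist z w :=
            infDist_translate L hLp.1 hwL y
          have h2 : Metric.infDist y (L' : Set (Euc d)) ≤ dist y z :=
            Metric.infDist_le_dist_of_mem hzL'
          have h3 : dist y z ≤ dist y x + dist x z := dist_triangle _ _ _
          have h4 : dist y x < r := mem_ball.mp hy
          have h5 : dist x z < r := by rw [dist_comm]; exact mem_ball.mp hz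
          have hg0y := Metric.infDist_nonneg (x := y) (s := (L : Set (Euc d)))
          rcases le_or_gt (Metric.infDist y (L : Set (Euc d))) (r / 2) with h6 | h6
          · rw [hgdef]
            simp only [min_eq_left h6]
            linarith
          · rw [hgdef]
            simp only [min_eq_right h6.le]
            linarith
        have hintL' : IntegrableOn (fun y => Metric.infDist y (L' : Set (Euc d)))
            (ball x r) μ := by
          have hgc : Continuous fun y => Metric.infDist y (L' : Set (Euc d)) :=
            Metric.continuous_infDist_pt _
          exact (hgc.locallyIntegrable.integrableOn_isCompact
            (isCompact_closedBall x r)).mono_set ball_subset_closedBall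
        have hintrhs : IntegrableOn (fun y => 4 * g y + dist z w) (ball x r) μ := by
          refine Integrable.add ?_ ?_
          · exact hgint.const_mul 4
          · exact integrableOn_const measure_ball_lt_top.ne
        have hintineq : ∫ y in ball x r, Metric.infDist y (L' : Set (Euc d)) ∂μ
            ≤ 4 * I + mB * dist z w := by
          have h7 := setIntegral_mono_on hintL' hintrhs measurableSet_ball hpt
          rw [integral_add (hgint.const_mul 4)
            (integrableOn_const measure_ball_lt_top.ne),
            integral_const_mul, setIntegral_const, smul_eq_mul] at h7
          exact h7
        have h8 : mB * dist z w ≤ 2 * I := by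
          calc mB * dist z w ≤ mB * (2 * I / mB) :=
                mul_le_mul_of_nonneg_left ht' hmB0
            _ = 2 * I := by field_simp
        have hle : betaCoef n 1 μ x r ≤ betaVal 1 μ x r L' :=
          csInf_le hbdd1 ⟨L', hL'p, hL'meet, rfl⟩
        have hbv1 : betaVal 1 μ x r L' =
            c3⁻¹ * ∫ y in ball x r, Metric.infDist y (L' : Set (Euc d)) / r ∂μ := by
          rw [betaVal]
          simp [Real.rpow_one]
          exact Or.inl rfl
        have hdiv : ∫ y in ball x r, Metric.infDist y (L' : Set (Euc d)) / r ∂μ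
            = (∫ y in ball x r, Metric.infDist y (L' : Set (Euc d)) ∂μ) / r :=
          integral_div r _
        have h9 : (∫ y in ball x r, Metric.infDist y (L' : Set (Euc d)) ∂μ) / r
            ≤ 6 * F / r := by
          have hX : ∫ y in ball x r, Metric.infDist y (L' : Set (Euc d)) ∂μ ≤ 6 * F := by
            linarith
          gcongr
        calc betaCoef n 1 μ x r ≤ betaVal 1 μ x r L' := hle
          _ = c3⁻¹ * ((∫ y in ball x r, Metric.infDist y (L' : Set (Euc d)) ∂μ) / r) := by
              rw [hbv1, hdiv]
          _ ≤ c3⁻¹ * (6 * F / r) := mul_le_mul_of_nonneg_left h9 (by positivity)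
          _ = 6 * F / (r * c3) := by
              rw [mul_comm, ← div_eq_mul_inv, div_div]
    -- conclude from hkey
    rw [← div_le_iff₀' hCpos]
    refine le_csInf ⟨alphaVal n μ x (2 * r) 0 L₀, 0, le_refl 0, L₀, hL₀plane, rfl⟩ ?_
    rintro a ⟨c, hc, L, hLp, rfl⟩
    rw [div_le_iff₀' hCpos]
    exact hkey c hc L hLp

end
end

section
/- Let 1 ≤ n ≤ d be integers. There exists a constant C depending only on n and d with the following property: if μ is a Radon measure on ℝ^d, B is a ball with μ(B) > 0, L is an affine n-plane intersecting 0.9B, and c ≥ 0 satisfies F_B(μ, c H^n|_L) ≤ F_B(μ, c' H^n|_L) for every c' ≥ 0 (i.e. c minimizes F_B(μ, · H^n|_L)), then c ≤ C μ(B)/r(B)^n. -/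
open MeasureTheory Metric Set

noncomputable section

open ENNReal NNReal

-- lower bound on Hausdorff measure of Euclidean ball
lemma haus_ball_lower (n : ℕ) (hn : 1 ≤ n) {t : ℝ} (ht : 0 < t) :
    ENNReal.ofReal ((2 * (t / Real.sqrt n)) ^ n) ≤ μH[(n : ℝ)] (ball (0 : Euc n) t) := by
  set e := WithLp.equiv 2 (∀ _ : Fin n, ℝ)
  have hsq : (0:ℝ) < Real.sqrt n := Real.sqrt_pos.2 (by exact_mod_cast hn)
  have h1 : LipschitzWith 1 e := PiLp.lipschitzWith_ofLp 2 _
  have h2 : AntilipschitzWith ((Fintype.card (Fin n) : ℝ≥0) ^ ((1 / (2:ℝ≥0∞)).toReal)) e :=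
    PiLp.antilipschitzWith_ofLp 2 _
  have hK : (((Fintype.card (Fin n) : ℝ≥0) ^ ((1 / (2:ℝ≥0∞)).toReal) : ℝ≥0) : ℝ) = Real.sqrt n := by
    simp [Fintype.card_fin, Real.sqrt_eq_rpow, NNReal.coe_rpow]
  have hsub : ball (0 : ∀ _ : Fin n, ℝ) (t / Real.sqrt n) ⊆ e '' ball (0 : Euc n) t := by
    intro y hy
    refine ⟨e.symm y, ?_, Equiv.apply_symm_apply _ _⟩
    have h0 : e.symm (0 : ∀ _ : Fin n, ℝ) = 0 := rfl
    have := h2.le_mul_dist (e.symm y) (e.symm 0)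
    simp only [Equiv.apply_symm_apply] at this
    rw [mem_ball, dist_zero_right] at hy ⊢
    calc ‖e.symm y‖ = dist (e.symm y) (e.symm 0) := by rw [h0, dist_zero_right]
      _ ≤ _ * dist y 0 := this
      _ = Real.sqrt n * ‖y‖ := by rw [hK, dist_zero_right]
      _ < Real.sqrt n * (t / Real.sqrt n) := by
          exact mul_lt_mul_of_pos_left hy hsq
      _ = t := by field_simp
  calc ENNReal.ofReal ((2 * (t / Real.sqrt n)) ^ n)
      = volume (ball (0 : ∀ _ : Fin n, ℝ) (t / Real.sqrt n)) := by
        rw [Real.volume_pi_ball _ (by positivity)]; simp [Fintype.card_fin]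
    _ ≤ volume (e '' ball (0 : Euc n) t) := measure_mono hsub
    _ = μH[(n:ℝ)] (e '' ball (0 : Euc n) t) := by
        rw [← hausdorffMeasure_pi_real (ι := Fin n)]; simp [Fintype.card_fin]
    _ ≤ (1:ℝ≥0∞) ^ (n:ℝ) * μH[(n:ℝ)] (ball (0 : Euc n) t) :=
        h1.hausdorffMeasure_image_le (by positivity) _
    _ = μH[(n:ℝ)] (ball (0 : Euc n) t) := by simp

lemma haus_ball_upper (n : ℕ) {t : ℝ} :
    μH[(n : ℝ)] (ball (0 : Euc n) t) ≠ ⊤ := by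
  set e := WithLp.equiv 2 (∀ _ : Fin n, ℝ)
  have h1 : LipschitzWith 1 e := PiLp.lipschitzWith_ofLp 2 _
  have h2 : AntilipschitzWith ((Fintype.card (Fin n) : ℝ≥0) ^ ((1 / (2:ℝ≥0∞)).toReal)) e :=
    PiLp.antilipschitzWith_ofLp 2 _
  have hsub : e '' ball (0 : Euc n) t ⊆ ball (0 : ∀ _ : Fin n, ℝ) t := by
    rintro y ⟨z, hz, rfl⟩
    rw [mem_ball, dist_zero_right] at hz ⊢
    calc ‖e z‖ = dist (e z) (e 0) := by rw [show e 0 = 0 from rfl, dist_zero_right]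
      _ ≤ 1 * dist z 0 := h1.dist_le_mul z 0
      _ = ‖z‖ := by simp
      _ < t := hz
  rcases le_or_gt t 0 with ht | ht
  · simp [ball_eq_empty.2 ht]
  have := h2.le_hausdorffMeasure_image (by positivity : (0:ℝ) ≤ (n:ℝ)) (ball (0 : Euc n) t)
  refine ne_top_of_le_ne_top ?_ this
  have hv : μH[(n:ℝ)] (e '' ball (0 : Euc n) t) ≤ ENNReal.ofReal ((2*t)^n) := by
    calc μH[(n:ℝ)] (e '' ball (0 : Euc n) t) = volume (e '' ball (0 : Euc n) t) := by
          rw [← hausdorffMeasure_pi_real (ι := Fin n)]; simp [Fintype.card_fin]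
      _ ≤ volume (ball (0 : ∀ _ : Fin n, ℝ) t) := measure_mono hsub
      _ = ENNReal.ofReal ((2*t)^n) := by rw [Real.volume_pi_ball _ ht]; simp [Fintype.card_fin]
  exact ENNReal.mul_ne_top (by simp) (ne_top_of_le_ne_top ENNReal.ofReal_ne_top hv)


lemma plane_ball_measure {d n : ℕ} (L : AffineSubspace ℝ (Euc d))
    (h : Module.finrank ℝ L.direction = n) {p : Euc d} (hp : p ∈ L) (t : ℝ) :
    μH[(n : ℝ)] ((L : Set (Euc d)) ∩ ball p t) = μH[(n : ℝ)] (ball (0 : Euc n) t) := by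
  set D := L.direction
  have : FiniteDimensional ℝ D := inferInstance
  let b : OrthonormalBasis (Fin n) ℝ D := (stdOrthonormalBasis ℝ D).reindex (finCongr h)
  let e : D ≃ₗᵢ[ℝ] Euc n := b.repr
  let f : Euc n → Euc d := fun v => p + (e.symm v : Euc d)
  have hf : Isometry f := by
    apply Isometry.of_dist_eq
    intro a c
    show dist (p + _) (p + _) = _
    rw [dist_add_left]
    rw [← e.symm.dist_map a c]
    exact (Subtype.dist_eq _ _)
  have hf0 : f 0 = p := by simp [f]
  have hrange : range f = (L : Set (Euc d)) := by
    ext y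
    constructor
    · rintro ⟨v, rfl⟩
      have : (e.symm v : Euc d) ∈ D := (e.symm v).2
      simpa [f, add_comm] using AffineSubspace.vadd_mem_of_mem_direction this hp
    · intro hy
      have hd : y - p ∈ D := AffineSubspace.vsub_mem_direction hy hp
      exact ⟨e ⟨y - p, hd⟩, by simp [f]⟩
  have himg : f '' ball (0 : Euc n) t = (L : Set (Euc d)) ∩ ball p t := by
    ext y
    constructor
    · rintro ⟨v, hv, rfl⟩
      refine ⟨hrange ▸ mem_range_self v, ?_⟩
      rw [mem_ball] at hv ⊢
      rw [← hf0, hf.dist_eq]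
      simpa using hv
    · rintro ⟨hyL, hyb⟩
      rw [← hrange] at hyL
      obtain ⟨v, rfl⟩ := hyL
      refine ⟨v, ?_, rfl⟩
      rw [mem_ball] at hyb ⊢
      rw [← hf0, hf.dist_eq] at hyb
      simpa using hyb
  rw [← himg, hf.hausdorffMeasure_image (Or.inl (by positivity))]


lemma lip1_bound_s8 {d : ℕ} (hd : 0 < d) (x : Euc d) {r : ℝ} (hr : 0 < r)
    (m : Measure (Euc d)) (hm : m (ball x r) ≠ ⊤) {ψ : Euc d → ℝ}
    (hψ : ψ ∈ Lip1 (ball x r)) :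
    Integrable ψ m ∧ |∫ y, ψ y ∂m| ≤ 3 * r * (m (ball x r)).toReal := by
  obtain ⟨hlip, hsupp⟩ := hψ
  set z : Euc d := x + (2 * r) • EuclideanSpace.single ⟨0, hd⟩ (1 : ℝ) with hz
  have hzx : dist z x = 2 * r := by
    rw [hz, dist_eq_norm, add_sub_cancel_left, norm_smul, EuclideanSpace.norm_single]
    simp [abs_of_pos hr]
  have hznb : z ∉ ball x r := by
    rw [mem_ball, hzx]; linarith
  have hψz : ψ z = 0 := image_eq_zero_of_notMem_tsupport (fun hc => hznb (hsupp hc))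
  have hbd : ∀ y, ‖ψ y‖ ≤ (ball x r).indicator (fun _ => 3 * r) y := by
    intro y
    by_cases hy : y ∈ ball x r
    · rw [indicator_of_mem hy]
      have : |ψ y - ψ z| ≤ dist y z := by
        simpa [Real.dist_eq] using hlip.dist_le_mul y z
      rw [hψz, sub_zero] at this
      rw [Real.norm_eq_abs]
      refine this.trans ?_
      calc dist y z ≤ dist y x + dist x z := dist_triangle _ _ _
        _ ≤ r + 2 * r := by
            have := mem_ball.1 hy
            rw [dist_comm x z, hzx]
            linarith
        _ = 3 * r := by ring
    · rw [indicator_of_notMem hy,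
        image_eq_zero_of_notMem_tsupport (fun hc => hy (hsupp hc))]
      simp
  have hgint : Integrable ((ball x r).indicator (fun _ => 3 * r)) m := by
    rw [integrable_indicator_iff measurableSet_ball]
    exact integrableOn_const hm
  have hint : Integrable ψ m := by
    refine hgint.mono' (hlip.continuous.aestronglyMeasurable) ?_
    exact Filter.Eventually.of_forall hbd
  refine ⟨hint, ?_⟩
  calc |∫ y, ψ y ∂m| = ‖∫ y, ψ y ∂m‖ := (Real.norm_eq_abs _).symm
    _ ≤ ∫ y, ‖ψ y‖ ∂m := norm_integral_le_integral_norm _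
    _ ≤ ∫ y, (ball x r).indicator (fun _ => 3 * r) y ∂m :=
        integral_mono hint.norm hgint hbd
    _ = 3 * r * (m (ball x r)).toReal := by
        rw [integral_indicator_const _ measurableSet_ball]; rw [smul_eq_mul, measureReal_def]; ring


/-- If `c` minimizes `c' ↦ F_B(μ, c' H^n|_L)` over `c' ≥ 0`, where `L` is
an affine `n`-plane meeting `0.9B` and `μ(B) > 0`, then `c ≤ C μ(B)/r(B)^n` for some
constant `C = C(n,d)`. -/
theorem statement8 (n d : ℕ) (hn : 1 ≤ n) (hnd : n ≤ d) :
    ∃ C > (0 : ℝ), ∀ (μ : Measure (Euc d)), IsLocallyFiniteMeasure μ →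
      ∀ (x : Euc d) (r : ℝ), 0 < r → 0 < μ (ball x r) →
      ∀ L : AffineSubspace ℝ (Euc d), IsAffinePlane n L →
        ((L : Set (Euc d)) ∩ ball x (0.9 * r)).Nonempty →
      ∀ c : ℝ, 0 ≤ c →
        (∀ c' : ℝ, 0 ≤ c' →
          Fdist (ball x r) μ (flatMeasure n c L) ≤ Fdist (ball x r) μ (flatMeasure n c' L)) →
        c ≤ C * (μ (ball x r)).toReal / r ^ n := by
  have hsq : (0:ℝ) < Real.sqrt n := Real.sqrt_pos.2 (by exact_mod_cast hn)
  set K : ℝ := (20 * Real.sqrt n) ^ n with hK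
  have hKpos : 0 < K := by positivity
  refine ⟨240 * K, by positivity, ?_⟩
  intro μ hμ x r hr hμB L hL hLB c hc hmin
  have hd : 0 < d := lt_of_lt_of_le hn hnd
  obtain ⟨hLne, hdim⟩ := hL
  obtain ⟨p, hpL, hpB⟩ := hLB
  rw [mem_ball] at hpB
  set ρ : ℝ := r / 20 with hρ
  have hρpos : 0 < ρ := by positivity
  -- test function
  set φ : Euc d → ℝ := fun y => max (ρ - dist y p) 0 with hφ
  have hφlip : LipschitzWith 1 φ := by
    have h1 : LipschitzWith 1 (fun y : Euc d => ρ - dist y p) := by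
      simpa using (LipschitzWith.const' (α := Euc d) ρ (K := 0)).sub (LipschitzWith.dist_left p)
    simpa [hφ] using h1.max_const 0
  have hφsupp : tsupport φ ⊆ ball x r := by
    have h1 : Function.support φ ⊆ closedBall p ρ := by
      intro y hy
      rw [Function.mem_support] at hy
      rw [mem_closedBall]
      by_contra hyc
      push_neg at hyc
      exact hy (by simp [hφ, max_eq_right, sub_nonpos.2 hyc.le])
    refine (closure_minimal h1 isClosed_closedBall).trans ?_
    intro y hy
    rw [mem_closedBall] at hy
    rw [mem_ball]
    calc dist y x ≤ dist y p + dist p x := dist_triangle _ _ _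
      _ < ρ + 0.9 * r := by linarith
      _ ≤ r := by rw [hρ]; norm_num; linarith
  have hφmem : φ ∈ Lip1 (ball x r) := ⟨hφlip, hφsupp⟩
  -- measures
  set σ : Measure (Euc d) := (μH[(n:ℝ)]).restrict (L : Set (Euc d)) with hσ
  have hσball : ∀ t : ℝ, σ (ball p t) = μH[(n:ℝ)] (ball (0 : Euc n) t) := by
    intro t
    rw [hσ, Measure.restrict_apply measurableSet_ball, inter_comm]
    exact plane_ball_measure L hdim hpL t
  have hballsub : ball x r ⊆ ball p (2 * r) := by
    intro y hy; rw [mem_ball] at hy ⊢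
    calc dist y p ≤ dist y x + dist x p := dist_triangle _ _ _
      _ < r + 0.9 * r := by rw [dist_comm x p]; linarith
      _ ≤ 2 * r := by linarith
  have hσfin : σ (ball x r) ≠ ⊤ := by
    refine ne_top_of_le_ne_top ?_ (measure_mono hballsub)
    rw [hσball]; exact haus_ball_upper n
  have hμfin : μ (ball x r) ≠ ⊤ := by
    refine ne_top_of_le_ne_top ?_ (measure_mono ball_subset_closedBall)
    exact (isCompact_closedBall x r).measure_lt_top.ne
  set M : ℝ := (μ (ball x r)).toReal with hM
  have hMnn : 0 ≤ M := ENNReal.toReal_nonneg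
  set ν : Measure (Euc d) := flatMeasure n c L with hν
  have hνσ : ν = ENNReal.ofReal c • σ := rfl
  have hνfin : ν (ball x r) ≠ ⊤ := by
    rw [hνσ]
    simp only [Measure.smul_apply, smul_eq_mul]
    exact ENNReal.mul_ne_top ENNReal.ofReal_ne_top hσfin
  -- F(μ, 0 measure) ≤ 3 r M
  have hflat0 : flatMeasure n 0 L = (0 : Measure (Euc d)) := by
    rw [flatMeasure]; simp
  have hF0 : Fdist (ball x r) μ (flatMeasure n 0 L) ≤ 3 * r * M := by
    rw [Fdist]
    apply Real.sSup_le
    · rintro t ⟨ψ, hψ, rfl⟩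
      rw [hflat0, integral_zero_measure, sub_zero]
      exact (lip1_bound_s8 hd x hr μ hμfin hψ).2
    · positivity
  -- F(μ, ν) ≥ value at φ
  have hbdd : BddAbove {t | ∃ ψ ∈ Lip1 (ball x r), t = |(∫ y, ψ y ∂μ) - ∫ y, ψ y ∂ν|} := by
    refine ⟨3 * r * M + 3 * r * (ν (ball x r)).toReal, ?_⟩
    rintro t ⟨ψ, hψ, rfl⟩
    calc |(∫ y, ψ y ∂μ) - ∫ y, ψ y ∂ν| ≤ |∫ y, ψ y ∂μ| + |∫ y, ψ y ∂ν| := abs_sub _ _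
      _ ≤ 3 * r * M + 3 * r * (ν (ball x r)).toReal :=
        add_le_add (lip1_bound_s8 hd x hr μ hμfin hψ).2 (lip1_bound_s8 hd x hr ν hνfin hψ).2
  have hFle : |(∫ y, φ y ∂μ) - ∫ y, φ y ∂ν| ≤ Fdist (ball x r) μ ν :=
    le_csSup hbdd ⟨φ, hφmem, rfl⟩
  -- chain
  have hintν : ∫ y, φ y ∂ν = c * ∫ y, φ y ∂σ := by
    rw [hνσ, integral_smul_measure, ENNReal.toReal_ofReal hc, smul_eq_mul]
  have hchain : c * ∫ y, φ y ∂σ ≤ 6 * r * M := by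
    have h2 : |(∫ y, φ y ∂μ) - ∫ y, φ y ∂ν| ≤ 3 * r * M :=
      hFle.trans ((hmin 0 le_rfl).trans hF0)
    have h3 : |∫ y, φ y ∂μ| ≤ 3 * r * M := (lip1_bound_s8 hd x hr μ hμfin hφmem).2
    have h4 : (∫ y, φ y ∂ν) - ∫ y, φ y ∂μ ≤ |(∫ y, φ y ∂μ) - ∫ y, φ y ∂ν| := by
      rw [abs_sub_comm]; exact le_abs_self _
    have h5 : ∫ y, φ y ∂μ ≤ |∫ y, φ y ∂μ| := le_abs_self _
    rw [← hintν]
    linarith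
  -- lower bound on ∫ φ dσ
  have hsmall : ball p (ρ/2) ⊆ ball x r := by
    intro y hy; rw [mem_ball] at hy ⊢
    calc dist y x ≤ dist y p + dist p x := dist_triangle _ _ _
      _ < ρ/2 + 0.9 * r := by linarith
      _ ≤ r := by rw [hρ]; norm_num; linarith
  have hσsmallfin : σ (ball p (ρ/2)) ≠ ⊤ := ne_top_of_le_ne_top hσfin (measure_mono hsmall)
  have hAlow : ρ/2 * (σ (ball p (ρ/2))).toReal ≤ ∫ y, φ y ∂σ := by
    have hφint : Integrable φ σ := (lip1_bound_s8 hd x hr σ hσfin hφmem).1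
    have hgint : Integrable ((ball p (ρ/2)).indicator fun _ => ρ/2) σ := by
      rw [integrable_indicator_iff measurableSet_ball]
      exact integrableOn_const hσsmallfin
    have hmono : ∀ y, (ball p (ρ/2)).indicator (fun _ => ρ/2) y ≤ φ y := by
      intro y
      by_cases hy : y ∈ ball p (ρ/2)
      · rw [indicator_of_mem hy]
        rw [mem_ball] at hy
        simp only [hφ, le_max_iff]
        left; linarith
      · rw [indicator_of_notMem hy]
        exact le_max_right _ _
    calc ρ/2 * (σ (ball p (ρ/2))).toReal
        = ∫ y, (ball p (ρ/2)).indicator (fun _ => ρ/2) y ∂σ := by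
          rw [integral_indicator_const _ measurableSet_ball, smul_eq_mul, measureReal_def]; ring
      _ ≤ ∫ y, φ y ∂σ := integral_mono hgint hφint hmono
  have hσlow : (ρ / Real.sqrt n) ^ n ≤ (σ (ball p (ρ/2))).toReal := by
    have h1 := haus_ball_lower n hn (t := ρ/2) (by positivity)
    rw [← hσball] at h1
    have h2 : (2 * (ρ/2 / Real.sqrt n)) ^ n = (ρ / Real.sqrt n) ^ n := by
      congr 1; field_simp
    calc (ρ / Real.sqrt n) ^ n
        = (ENNReal.ofReal ((2 * (ρ/2 / Real.sqrt n)) ^ n)).toReal := by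
          rw [ENNReal.toReal_ofReal (by positivity), h2]
      _ ≤ (σ (ball p (ρ/2))).toReal := ENNReal.toReal_mono hσsmallfin h1
  -- final algebra
  have hA : c * (ρ/2 * (ρ / Real.sqrt n) ^ n) ≤ 6 * r * M := by
    refine le_trans (mul_le_mul_of_nonneg_left ?_ hc) hchain
    calc ρ/2 * (ρ / Real.sqrt n) ^ n ≤ ρ/2 * (σ (ball p (ρ/2))).toReal :=
          mul_le_mul_of_nonneg_left hσlow (by positivity)
      _ ≤ ∫ y, φ y ∂σ := hAlow
  have hKr : (ρ / Real.sqrt n) ^ n = r ^ n / K := by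
    rw [hρ, div_div, div_pow, hK]
  rw [hKr, hρ] at hA
  rw [le_div_iff₀ (pow_pos hr n)]
  have hrne : r ≠ 0 := hr.ne'
  have hKne : K ≠ 0 := hKpos.ne'
  calc c * r ^ n = (c * (r/20/2 * (r ^ n / K))) * (40 * K / r) := by field_simp; ring
    _ ≤ (6 * r * M) * (40 * K / r) := mul_le_mul_of_nonneg_right hA (by positivity)
    _ = 240 * K * M := by field_simp; ring

end
end

section
/- Let 1 ≤ n ≤ d be integers and C₀ ≥ 1. There exist constants ε > 0 and c₁ > 0, depending only on n, d and C₀, with the following property: if μ is a Radon measure on ℝ^d, B is a ball with μ(B) > 0 and μ(3B) ≤ C₀ μ(0.9B), L is an affine n-plane intersecting 0.9B, and c ≥ 0 minimizes F_B(μ, · H^n|_L) and satisfies F_B(μ, c H^n|_L) ≤ ε μ(3B) r(B), then c ≥ c₁ μ(3B)/r(B)^n. -/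
open MeasureTheory Metric Set

noncomputable section

lemma auxHaar {E : Type*} [NormedAddCommGroup E] [NormedSpace ℝ E] [FiniteDimensional ℝ E]
    [MeasurableSpace E] [BorelSpace E] {n : ℕ} (h : Module.finrank ℝ E = n) :
    (μH[(n : ℝ)] : Measure E).IsAddHaarMeasure := by
  subst h
  exact MeasureTheory.isAddHaarMeasure_hausdorffMeasure

/-- If `μ(3B) ≤ C₀ μ(0.9B)`, `c ≥ 0` minimizes `c' ↦ F_B(μ, c' H^n|_L)`
over `c' ≥ 0` for an affine `n`-plane `L` meeting `0.9B`, and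
`F_B(μ, c H^n|_L) ≤ ε μ(3B) r(B)`, then `c ≥ c₁ μ(3B)/r(B)^n`, where `ε, c₁ > 0`
depend only on `n, d, C₀`. -/
theorem statement9 (n d : ℕ) (hn : 1 ≤ n) (hnd : n ≤ d) (C₀ : ℝ) (hC₀ : 1 ≤ C₀) :
    ∃ ε > (0 : ℝ), ∃ c₁ > (0 : ℝ), ∀ (μ : Measure (Euc d)), IsLocallyFiniteMeasure μ →
      ∀ (x : Euc d) (r : ℝ), 0 < r → 0 < μ (ball x r) →
      μ (ball x (3 * r)) ≤ ENNReal.ofReal C₀ * μ (ball x (0.9 * r)) →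
      ∀ L : AffineSubspace ℝ (Euc d), IsAffinePlane n L →
        ((L : Set (Euc d)) ∩ ball x (0.9 * r)).Nonempty →
      ∀ c : ℝ, 0 ≤ c →
        (∀ c' : ℝ, 0 ≤ c' →
          Fdist (ball x r) μ (flatMeasure n c L) ≤ Fdist (ball x r) μ (flatMeasure n c' L)) →
        Fdist (ball x r) μ (flatMeasure n c L) ≤ ε * (μ (ball x (3 * r))).toReal * r →
        c₁ * (μ (ball x (3 * r))).toReal / r ^ n ≤ c := by
  classical
  haveI : Nonempty (Fin n) := ⟨⟨0, hn⟩⟩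
  haveI hnt : Nontrivial (Euc n) := by
    have h : 0 < Module.finrank ℝ (Euc n) := by
      rw [finrank_euclideanSpace_fin]; omega
    exact Module.nontrivial_of_finrank_pos h
  haveI hHaar : (μH[(n : ℝ)] : Measure (Euc n)).IsAddHaarMeasure :=
    auxHaar finrank_euclideanSpace_fin
  set V : ENNReal := μH[(n : ℝ)] (ball (0 : Euc n) 1) with hVdef
  have hVpos : 0 < V := measure_ball_pos _ _ one_pos
  have hVlt : V < ⊤ := measure_ball_lt_top
  set ι : ℝ := V.toReal with hιdef
  have hιpos : 0 < ι := ENNReal.toReal_pos hVpos.ne' hVlt.ne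
  have hC₀pos : (0 : ℝ) < C₀ := lt_of_lt_of_le one_pos hC₀
  refine ⟨1 / (40 * C₀), by positivity, 1 / (2 ^ (n + 1) * C₀ * ι), by positivity, ?_⟩
  intro μ hμloc x r hr hrpos hdoub L hL hLmeet c hc _hmin hF
  haveI := hμloc
  obtain ⟨p, hpL, hpB⟩ := hLmeet
  obtain ⟨-, hdim⟩ := hL
  -- the plane has controlled Hausdorff measure in the ball
  let e : Euc n ≃ₗᵢ[ℝ] L.direction :=
    ((stdOrthonormalBasis ℝ L.direction).reindex (finCongr hdim)).repr.symm
  let f : Euc n → Euc d := fun v => p + (e v : Euc d)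
  have hfiso : Isometry f := by
    refine Isometry.of_dist_eq fun v w => ?_
    have h1 : dist (f v) (f w) = dist ((e v : Euc d)) ((e w : Euc d)) := dist_add_left p _ _
    rw [h1, ← Subtype.dist_eq, e.dist_map]
  have hplane : μH[(n : ℝ)] (ball x r ∩ (L : Set (Euc d))) ≤ ENNReal.ofReal ((2 * r) ^ n) * V := by
    have hsub : ball x r ∩ (L : Set (Euc d)) ⊆ f '' ball (0 : Euc n) (2 * r) := by
      rintro z ⟨hzB, hzL⟩
      have hdmem : z - p ∈ L.direction := by
        simpa using AffineSubspace.vsub_mem_direction hzL hpL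
      refine ⟨e.symm ⟨z - p, hdmem⟩, ?_, ?_⟩
      · rw [mem_ball, dist_zero_right, e.symm.norm_map]
        have hzn : ‖(⟨z - p, hdmem⟩ : L.direction)‖ = ‖z - p‖ := rfl
        rw [hzn]
        have h1 : ‖z - p‖ = dist z p := (dist_eq_norm z p).symm
        have h2 : dist z p ≤ dist z x + dist x p := dist_triangle z x p
        have h3 : dist z x < r := mem_ball.1 hzB
        have h4 : dist x p < 0.9 * r := by rw [dist_comm]; exact mem_ball.1 hpB
        rw [h1]; nlinarith
      · show p + ((e (e.symm ⟨z - p, hdmem⟩)) : Euc d) = z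
        rw [e.apply_symm_apply]
        simp
    calc μH[(n : ℝ)] (ball x r ∩ (L : Set (Euc d)))
        ≤ μH[(n : ℝ)] (f '' ball (0 : Euc n) (2 * r)) := measure_mono hsub
      _ ≤ (1 : NNReal) ^ (n : ℝ) * μH[(n : ℝ)] (ball (0 : Euc n) (2 * r)) :=
          hfiso.lipschitz.hausdorffMeasure_image_le (by positivity) _
      _ = μH[(n : ℝ)] (ball (0 : Euc n) (2 * r)) := by simp
      _ = ENNReal.ofReal ((2 * r) ^ n) * V := by
          rw [Measure.addHaar_ball _ _ (by positivity : (0:ℝ) ≤ 2 * r),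
            finrank_euclideanSpace_fin, hVdef]
  set B : Set (Euc d) := ball x r with hBdef
  set ν : Measure (Euc d) := flatMeasure n c L with hνdef
  have hνball : ν B = ENNReal.ofReal c * μH[(n : ℝ)] (B ∩ (L : Set (Euc d))) := by
    rw [hνdef, flatMeasure, Measure.smul_apply, smul_eq_mul,
      Measure.restrict_apply measurableSet_ball]
  have hνlt : ν B < ⊤ := by
    rw [hνball]
    exact ENNReal.mul_lt_top ENNReal.ofReal_lt_top
      (lt_of_le_of_lt hplane (ENNReal.mul_lt_top ENNReal.ofReal_lt_top hVlt))
  have hνle : (ν B).toReal ≤ c * ((2 * r) ^ n * ι) := by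
    rw [hνball, ENNReal.toReal_mul, ENNReal.toReal_ofReal hc]
    have h1 : (μH[(n : ℝ)] (B ∩ (L : Set (Euc d)))).toReal ≤ (2 * r) ^ n * ι := by
      have h2 := ENNReal.toReal_mono
        (ENNReal.mul_ne_top ENNReal.ofReal_ne_top hVlt.ne) hplane
      rwa [ENNReal.toReal_mul, ENNReal.toReal_ofReal (by positivity)] at h2
    exact mul_le_mul_of_nonneg_left h1 hc
  -- the test function
  set g : ℝ → ℝ := fun t => min (max (19 * r / 20 - t) 0) (r / 20) with hgdef
  have hgiso : Isometry (fun t : ℝ => 19 * r / 20 - t) := by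
    refine Isometry.of_dist_eq fun a b => ?_
    simp only [Real.dist_eq]
    rw [show 19 * r / 20 - a - (19 * r / 20 - b) = -(a - b) by ring, abs_neg]
  have hglip : LipschitzWith 1 g := (hgiso.lipschitz.max_const 0).min_const _
  set φ : Euc d → ℝ := fun y => g (dist x y) with hφdef
  have hφlip : LipschitzWith 1 φ := by
    have h := hglip.comp (LipschitzWith.dist_right x)
    rw [mul_one] at h
    exact h
  have hφzero : ∀ y : Euc d, 19 * r / 20 ≤ dist x y → φ y = 0 := by
    intro y hy
    have h1 : max (19 * r / 20 - dist x y) 0 = 0 := max_eq_right (by linarith)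
    simp only [hφdef, hgdef, h1]
    exact min_eq_left (by positivity)
  have hsupp : tsupport φ ⊆ B := by
    have h1 : Function.support φ ⊆ closedBall x (19 * r / 20) := by
      intro y hy
      rw [Function.mem_support] at hy
      rw [mem_closedBall, dist_comm]
      by_contra h
      exact hy (hφzero y (le_of_lt (not_le.1 h)))
    refine (closure_minimal h1 isClosed_closedBall).trans (closedBall_subset_ball ?_)
    linarith
  have hφmem : φ ∈ Lip1 B := ⟨hφlip, hsupp⟩
  have hφnonneg : ∀ y, 0 ≤ φ y := fun y =>
    le_min (le_max_right _ _) (by positivity)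
  have hφle : ∀ y, φ y ≤ r / 20 := fun y => min_le_right _ _
  have hφeq : ∀ y ∈ ball x (0.9 * r), φ y = r / 20 := by
    intro y hy
    rw [mem_ball, dist_comm] at hy
    have h09 : (0.9 : ℝ) * r = 9 * r / 10 := by ring
    have h1 : r / 20 ≤ 19 * r / 20 - dist x y := by
      rw [h09] at hy; linarith
    simp only [hφdef, hgdef]
    rw [max_eq_left (by linarith : (0:ℝ) ≤ 19 * r / 20 - dist x y)]
    exact min_eq_right h1
  -- uniform bound on members of Lip1 B
  have hbd : ∀ ψ ∈ Lip1 B, ∀ y, |ψ y| ≤ 3 * r := by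
    rintro ψ ⟨hlip, hsup⟩ y
    set u : Euc d := EuclideanSpace.single (⟨0, lt_of_lt_of_le hn hnd⟩ : Fin d) (1 : ℝ)
      with hudef
    set z : Euc d := x + (2 * r) • u with hzdef
    have hxz : dist x z = 2 * r := by
      rw [hzdef, dist_self_add_right, norm_smul, Real.norm_eq_abs,
        abs_of_nonneg (by positivity : (0:ℝ) ≤ 2 * r), hudef,
        EuclideanSpace.norm_single, norm_one, mul_one]
    have hz : z ∉ B := by
      rw [hBdef, mem_ball, dist_comm, hxz]
      linarith
    have hzψ : ψ z = 0 := image_eq_zero_of_notMem_tsupport fun h => hz (hsup h)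
    by_cases hy : y ∈ B
    · have h1 : |ψ y - ψ z| ≤ dist y z := by
        have := hlip.dist_le_mul y z
        rwa [Real.dist_eq, NNReal.coe_one, one_mul] at this
      have h2 : dist y z ≤ dist y x + dist x z := dist_triangle y x z
      have h3 : dist y x < r := mem_ball.1 hy
      rw [← sub_zero (ψ y), ← hzψ]
      rw [hxz] at h2
      linarith
    · have : ψ y = 0 := image_eq_zero_of_notMem_tsupport fun h => hy (hsup h)
      rw [this, abs_zero]; positivity
  -- integrability
  have hintμ : ∀ ψ ∈ Lip1 B, Integrable ψ μ := by
    rintro ψ ⟨hlip, hsup⟩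
    have hcs : HasCompactSupport ψ := by
      refine Metric.isCompact_of_isClosed_isBounded (isClosed_tsupport ψ) ?_
      exact Metric.isBounded_ball.subset hsup
    exact hlip.continuous.integrable_of_hasCompactSupport hcs
  haveI hνfin : IsFiniteMeasure (ν.restrict B) :=
    ⟨by rwa [Measure.restrict_apply_univ]⟩
  have hintν : ∀ ψ ∈ Lip1 B, Integrable ψ ν := by
    rintro ψ hψ
    have heq : ψ = B.indicator ψ := by
      ext y
      by_cases hy : y ∈ B
      · rw [Set.indicator_of_mem hy]
      · rw [Set.indicator_of_notMem hy]
        exact image_eq_zero_of_notMem_tsupport fun h => hy (hψ.2 h)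
    rw [heq, integrable_indicator_iff measurableSet_ball]
    refine (integrable_const (3 * r)).mono'
      hψ.1.continuous.aestronglyMeasurable (ae_of_all _ fun y => ?_)
    rw [Real.norm_eq_abs]
    exact hbd ψ hψ y
  have hIμ : ∀ ψ ∈ Lip1 B, ∫ y, ψ y ∂μ = ∫ y in B, ψ y ∂μ := fun ψ hψ =>
    (setIntegral_eq_integral_of_forall_compl_eq_zero fun y hy =>
      image_eq_zero_of_notMem_tsupport fun h => hy (hψ.2 h)).symm
  have hIν : ∀ ψ ∈ Lip1 B, ∫ y, ψ y ∂ν = ∫ y in B, ψ y ∂ν := fun ψ hψ =>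
    (setIntegral_eq_integral_of_forall_compl_eq_zero fun y hy =>
      image_eq_zero_of_notMem_tsupport fun h => hy (hψ.2 h)).symm
  have hμBlt : μ B < ⊤ := measure_ball_lt_top
  -- F distance bounds
  have hSbdd : BddAbove { t | ∃ ψ ∈ Lip1 B, t = |(∫ y, ψ y ∂μ) - ∫ y, ψ y ∂ν| } := by
    refine ⟨3 * r * (μ B).toReal + 3 * r * (ν B).toReal, ?_⟩
    rintro t ⟨ψ, hψ, rfl⟩
    have h1 : |∫ y, ψ y ∂μ| ≤ 3 * r * (μ B).toReal := by
      rw [hIμ ψ hψ]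
      have := norm_setIntegral_le_of_norm_le_const (μ := μ) (s := B) (f := ψ)
        hμBlt (fun y _ => by
          rw [Real.norm_eq_abs]; exact hbd ψ hψ y)
      rwa [Real.norm_eq_abs, measureReal_def] at this
    have h2 : |∫ y, ψ y ∂ν| ≤ 3 * r * (ν B).toReal := by
      rw [hIν ψ hψ]
      have := norm_setIntegral_le_of_norm_le_const (μ := ν) (s := B) (f := ψ)
        hνlt (fun y _ => by
          rw [Real.norm_eq_abs]; exact hbd ψ hψ y)
      rwa [Real.norm_eq_abs, measureReal_def] at this
    calc |(∫ y, ψ y ∂μ) - ∫ y, ψ y ∂ν| ≤ |∫ y, ψ y ∂μ| + |∫ y, ψ y ∂ν| := abs_sub _ _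
      _ ≤ 3 * r * (μ B).toReal + 3 * r * (ν B).toReal := add_le_add h1 h2
  have hFge : (∫ y, φ y ∂μ) - ∫ y, φ y ∂ν ≤ Fdist B μ ν := by
    refine le_trans (le_abs_self _) (le_csSup hSbdd ⟨φ, hφmem, rfl⟩)
  -- lower bound for ∫ φ dμ
  have hμ09lt : μ (ball x (0.9 * r)) < ⊤ := measure_ball_lt_top
  have h1 : r / 20 * (μ (ball x (0.9 * r))).toReal ≤ ∫ y, φ y ∂μ := by
    have hle : ∫ y in ball x (0.9 * r), φ y ∂μ ≤ ∫ y, φ y ∂μ :=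
      setIntegral_le_integral (hintμ φ hφmem) (ae_of_all _ hφnonneg)
    have heq : ∫ y in ball x (0.9 * r), φ y ∂μ = ∫ _y in ball x (0.9 * r), (r / 20) ∂μ :=
      setIntegral_congr_fun measurableSet_ball fun y hy => hφeq y hy
    rw [heq, setIntegral_const, smul_eq_mul, measureReal_def] at hle
    linarith [hle]
  -- upper bound for ∫ φ dν
  have h2 : ∫ y, φ y ∂ν ≤ r / 20 * (ν B).toReal := by
    rw [hIν φ hφmem]
    have hmono : ∫ y in B, φ y ∂ν ≤ ∫ _y in B, (r / 20) ∂ν := by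
      refine setIntegral_mono_on (hintν φ hφmem).integrableOn
        (integrableOn_const hνlt.ne) measurableSet_ball fun y _ => hφle y
    rw [setIntegral_const, smul_eq_mul, measureReal_def] at hmono
    linarith [hmono]
  -- doubling in real form
  have hdoubR : (μ (ball x (3 * r))).toReal ≤ C₀ * (μ (ball x (0.9 * r))).toReal := by
    have h3 := ENNReal.toReal_mono
      (ENNReal.mul_ne_top ENNReal.ofReal_ne_top hμ09lt.ne) hdoub
    rwa [ENNReal.toReal_mul, ENNReal.toReal_ofReal (le_of_lt hC₀pos)] at h3
  set M : ℝ := (μ (ball x (3 * r))).toReal with hMdef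
  set M9 : ℝ := (μ (ball x (0.9 * r))).toReal with hM9def
  set N : ℝ := (ν B).toReal with hNdef
  have hM9nn : 0 ≤ M9 := ENNReal.toReal_nonneg
  have hNnn : 0 ≤ N := ENNReal.toReal_nonneg
  -- combine
  have hkey : r / 20 * M9 - r / 20 * N ≤ 1 / (40 * C₀) * M * r := by
    calc r / 20 * M9 - r / 20 * N ≤ (∫ y, φ y ∂μ) - ∫ y, φ y ∂ν := by linarith
      _ ≤ Fdist B μ ν := hFge
      _ ≤ 1 / (40 * C₀) * M * r := hF
  have hMup : 1 / (40 * C₀) * M * r ≤ r * M9 / 40 := by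
    have h4 : 1 / (40 * C₀) * M ≤ 1 / (40 * C₀) * (C₀ * M9) := by
      refine mul_le_mul_of_nonneg_left hdoubR (by positivity)
    have h5 : 1 / (40 * C₀) * (C₀ * M9) = M9 / 40 := by
      field_simp
    have h6 : 1 / (40 * C₀) * M * r ≤ M9 / 40 * r := by
      refine mul_le_mul_of_nonneg_right (h5 ▸ h4) (le_of_lt hr)
    linarith
  have hM9N : M9 ≤ 2 * N := by
    have h7 : r / 20 * M9 - r / 20 * N ≤ r * M9 / 40 := le_trans hkey hMup
    nlinarith
  have hfinal : M ≤ c * r ^ n * (2 ^ (n + 1) * C₀ * ι) := by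
    have h8 : (2 * r) ^ n = 2 ^ n * r ^ n := mul_pow 2 r n
    calc M ≤ C₀ * M9 := hdoubR
      _ ≤ C₀ * (2 * N) := mul_le_mul_of_nonneg_left hM9N (le_of_lt hC₀pos)
      _ ≤ C₀ * (2 * (c * ((2 * r) ^ n * ι))) := by
          refine mul_le_mul_of_nonneg_left ?_ (le_of_lt hC₀pos)
          linarith [hνle]
      _ = c * r ^ n * (2 ^ (n + 1) * C₀ * ι) := by
          rw [h8, pow_succ]; ring
  rw [div_le_iff₀ (by positivity : (0:ℝ) < r ^ n), one_div_mul_eq_div,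
    div_le_iff₀ (by positivity : (0:ℝ) < 2 ^ (n + 1) * C₀ * ι)]
  calc M ≤ c * r ^ n * (2 ^ (n + 1) * C₀ * ι) := hfinal
    _ = c * r ^ n * (2 ^ (n + 1) * C₀ * ι) := rfl

end
end

section
/- Let μ be a Radon measure on ℝ^d and let α > 1. Then for μ-almost every x ∈ ℝ^d there exists a sequence of radii r_j > 0 with r_j → 0 such that for every j, μ(B(x, α r_j)) ≤ 2 α^d μ(B(x, r_j)). -/
open MeasureTheory Metric Set
open scoped ENNReal

/-- For a Radon measure `μ` on `ℝ^d` and `α > 1`, for `μ`-a.e. `x` there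
is a sequence of radii `r_j → 0` with `μ(B(x, α r_j)) ≤ 2 α^d μ(B(x, r_j))` for all `j`. -/
theorem statement12 (d : ℕ) (μ : Measure (EuclideanSpace ℝ (Fin d)))
    [IsLocallyFiniteMeasure μ] (α : ℝ) (hα : 1 < α) :
    ∀ᵐ x ∂μ, ∃ r : ℕ → ℝ, (∀ j, 0 < r j) ∧
      Filter.Tendsto r Filter.atTop (nhds 0) ∧
      ∀ j, μ (ball x (α * r j)) ≤ ENNReal.ofReal (2 * α ^ d) * μ (ball x (r j)) := by
  have hα0 : (0:ℝ) < α := lt_trans one_pos hα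
  filter_upwards [Besicovitch.ae_tendsto_rnDeriv (volume) μ, Measure.rnDeriv_lt_top volume μ]
    with x hx hx'
  have key : ∀ ε : ℝ, 0 < ε → ∃ r : ℝ, 0 < r ∧ r ≤ ε ∧
      μ (ball x (α * r)) ≤ ENNReal.ofReal (2 * α ^ d) * μ (ball x r) := by
    intro ε hε
    by_contra h
    push_neg at h
    have hgt : ∀ r : ℝ, 0 < r → r ≤ ε →
        ENNReal.ofReal (2 * α ^ d) * μ (ball x r) < μ (ball x (α * r)) := fun r h1 h2 =>
      h r h1 h2
    set M : ℝ≥0∞ := μ (ball x ε) with hM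
    set C : ℝ≥0∞ := ENNReal.ofReal (2 * α ^ d) with hC
    have hCpos : C ≠ 0 := by
      simp [hC, ENNReal.ofReal_eq_zero, not_le]
      positivity
    have hCfin : C ≠ ⊤ := ENNReal.ofReal_ne_top
    have hMfin : M ≠ ⊤ := measure_ball_lt_top.ne
    have hMpos : M ≠ 0 := by
      intro hM0
      have h1 : 0 < ε / α := div_pos hε hα0
      have h2 : ε / α ≤ ε := by
        rw [div_le_iff₀ hα0]; nlinarith
      have := hgt (ε / α) h1 h2
      rw [mul_div_cancel₀ _ (ne_of_gt hα0)] at this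
      rw [← hM] at this
      simp [hM0] at this
    have hiter : ∀ n : ℕ, C ^ n * μ (ball x (ε / α ^ n)) ≤ M := by
      intro n
      induction n with
      | zero => simp [hM]
      | succ n ih =>
        refine le_trans ?_ ih
        have h1 : 0 < ε / α ^ (n+1) := div_pos hε (pow_pos hα0 _)
        have h2 : ε / α ^ (n+1) ≤ ε := by
          rw [div_le_iff₀ (pow_pos hα0 _)]
          nlinarith [one_le_pow₀ hα.le (n := n+1)]
        have hle := (hgt _ h1 h2).le
        have heq : α * (ε / α ^ (n+1)) = ε / α ^ n := by
          field_simp; ring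
        rw [heq] at hle
        calc C ^ (n+1) * μ (ball x (ε / α ^ (n+1)))
            = C ^ n * (C * μ (ball x (ε / α ^ (n+1)))) := by ring
          _ ≤ C ^ n * μ (ball x (ε / α ^ n)) := mul_le_mul_right hle _
    set V : ℝ≥0∞ := volume (ball (0 : EuclideanSpace ℝ (Fin d)) 1) with hV
    have hVpos : V ≠ 0 := (measure_ball_pos _ _ one_pos).ne'
    set s : ℕ → ℝ := fun n => ε / α ^ (n+1) with hs
    have hspos : ∀ n, 0 < s n := fun n => div_pos hε (pow_pos hα0 _)
    have hstend : Filter.Tendsto s Filter.atTop (nhdsWithin 0 (Ioi 0)) := by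
      apply tendsto_nhdsWithin_of_tendsto_nhds_of_eventually_within
      · have : Filter.Tendsto (fun n : ℕ => α ^ (n+1)) Filter.atTop Filter.atTop :=
          (tendsto_pow_atTop_atTop_of_one_lt hα).comp (Filter.tendsto_add_atTop_nat 1)
        simpa [hs] using Filter.Tendsto.div_atTop tendsto_const_nhds this
      · exact Filter.Eventually.of_forall fun n => hspos n
    have hratio : Filter.Tendsto
        (fun n => volume (closedBall x (s n)) / μ (closedBall x (s n)))
        Filter.atTop (nhds (volume.rnDeriv μ x)) := hx.comp hstend
    set c : ℝ≥0∞ := ENNReal.ofReal ((ε/α)^d) * V / M with hc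
    have hcpos : c ≠ 0 := by
      apply (ENNReal.div_pos _ hMfin).ne'
      apply mul_ne_zero _ hVpos
      simp only [ne_eq, ENNReal.ofReal_eq_zero, not_le]
      positivity
    have hlow : ∀ n : ℕ, (2:ℝ≥0∞) ^ n * c ≤
        volume (closedBall x (s n)) / μ (closedBall x (s n)) := by
      intro n
      have hnum : volume (closedBall x (s n)) = ENNReal.ofReal ((s n) ^ d) * V := by
        rw [Measure.addHaar_closedBall volume x (hspos n).le, finrank_euclideanSpace_fin]
      have hden : μ (closedBall x (s n)) ≤ μ (ball x (ε / α ^ n)) := by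
        apply measure_mono
        apply closedBall_subset_ball
        rw [hs]
        simp only
        rw [div_lt_div_iff₀ (pow_pos hα0 _) (pow_pos hα0 _)]
        have hpow : α ^ n < α ^ (n+1) := pow_lt_pow_right₀ hα (by omega)
        nlinarith [pow_pos hα0 n, pow_pos hα0 (n+1)]
      have hden2 : C ^ n * μ (closedBall x (s n)) ≤ M :=
        le_trans (mul_le_mul_right hden _) (hiter n)
      have e1 : C ^ n * ENNReal.ofReal ((s n)^d) = (2:ℝ≥0∞)^n * ENNReal.ofReal ((ε/α)^d) := by
        rw [hC, ← ENNReal.ofReal_pow (by positivity), ← ENNReal.ofReal_mul (by positivity),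
          show ((2:ℝ≥0∞)^n = ENNReal.ofReal (2^n)) by simp [ENNReal.ofReal_pow],
          ← ENNReal.ofReal_mul (by positivity)]
        congr 1
        rw [hs]
        simp only
        field_simp
        rw [div_pow, div_pow, ← pow_mul, add_mul, one_mul, pow_add, mul_pow, ← pow_mul, mul_comm d n]
        field_simp
      have hkey : (2:ℝ≥0∞) ^ n * c = C ^ n * (ENNReal.ofReal ((s n) ^ d) * V) / M := by
        rw [hc, ← mul_div_assoc, ← mul_assoc, ← mul_assoc, e1]
      rw [hkey, hnum]
      calc C ^ n * (ENNReal.ofReal ((s n) ^ d) * V) / M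
          ≤ C ^ n * (ENNReal.ofReal ((s n) ^ d) * V) / (C ^ n * μ (closedBall x (s n))) :=
            ENNReal.div_le_div_left hden2 _
        _ = ENNReal.ofReal ((s n) ^ d) * V / μ (closedBall x (s n)) :=
            ENNReal.mul_div_mul_left _ _ (pow_ne_zero _ hCpos) (ENNReal.pow_ne_top hCfin)
    have hcfin : c ≠ ⊤ := (ENNReal.div_lt_top
        (ENNReal.mul_ne_top ENNReal.ofReal_ne_top measure_ball_lt_top.ne) hMpos).ne
    have htop : Filter.Tendsto (fun n : ℕ => (2:ℝ≥0∞) ^ n * c) Filter.atTop (nhds ⊤) := by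
      have h2 : Filter.Tendsto (fun n : ℕ => (2:ℝ≥0∞) ^ n) Filter.atTop (nhds ⊤) :=
        ENNReal.tendsto_pow_atTop_nhds_top_iff.2 (by norm_num)
      have := ENNReal.Tendsto.mul_const h2 (Or.inr hcfin)
      rwa [ENNReal.top_mul hcpos] at this
    have htop2 : Filter.Tendsto
        (fun n => volume (closedBall x (s n)) / μ (closedBall x (s n)))
        Filter.atTop (nhds ⊤) :=
      tendsto_nhds_top_mono' htop hlow
    have := tendsto_nhds_unique hratio htop2
    rw [this] at hx'
    exact absurd hx' (by simp)
  -- build the sequence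
  have H : ∀ j : ℕ, ∃ r : ℝ, 0 < r ∧ r ≤ 1/(j+1) ∧
      μ (ball x (α * r)) ≤ ENNReal.ofReal (2 * α ^ d) * μ (ball x r) := fun j =>
    key (1/(j+1)) (by positivity)
  choose r h1 h2 h3 using H
  refine ⟨r, h1, ?_, h3⟩
  exact squeeze_zero (fun j => (h1 j).le) h2 tendsto_one_div_add_atTop_nhds_zero_nat
end
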